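/- arXiv:2206.05925 — 7 statements merged into one kernel-verified Lean document; each statement's English description precedes it below -/
import Mathlib

section
/- Let L be a perfect complex Lie algebra (i.e. L = [L, L]) and let M be an L-module such that Z_M(L) := {u ∈ M : x · u = 0 for all x ∈ L} = {0}. Then every skew-symmetric biderivation δ : L × L → M is of the form δ(x, y) = γ([x, y]) for all x, y ∈ L, where γ ∈ Cent_L(M). -/
open scoped TensorProduct

theorem perfect_skew_biderivation
    (L : Type) [LieRing L] [LieAlgebra ℂ L]
    (hperf : Submodule.span ℂ {z : L | ∃ x y : L, z = ⁅x, y⁆} = ⊤)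
    (M : Type) [AddCommGroup M] [Module ℂ M] [LieRingModule L M] [LieModule ℂ L M]
    (hZ : ∀ u : M, (∀ x : L, ⁅x, u⁆ = 0) → u = 0)
    (δ : L →ₗ[ℂ] L →ₗ[ℂ] M)
    (hbd1 : ∀ x y z : L, δ ⁅x, y⁆ z = ⁅x, δ y z⁆ - ⁅y, δ x z⁆)
    (hbd2 : ∀ x y z : L, δ x ⁅y, z⁆ = ⁅y, δ x z⁆ - ⁅z, δ x y⁆)
    (hskewsym : ∀ x y : L, δ x y = -δ y x) :
    ∃ γ : L →ₗ[ℂ] M, (∀ x y : L, γ ⁅x, y⁆ = ⁅x, γ y⁆) ∧ ∀ x y : L, δ x y = γ ⁅x, y⁆ := by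
  -- halving in the complex vector space M
  have half : ∀ m : M, m + m = 0 → m = 0 := by
    intro m hm
    have h2 : (2:ℂ) • m = 0 := by rw [two_smul]; exact hm
    calc m = (2:ℂ)⁻¹ • ((2:ℂ) • m) := by
            rw [← mul_smul]; norm_num
      _ = 0 := by rw [h2, smul_zero]
  -- identity (I)
  have hI : ∀ x y z w : L,
      ⁅⁅x,z⁆, δ y w⁆ + ⁅⁅y,w⁆, δ x z⁆ = ⁅⁅x,w⁆, δ y z⁆ + ⁅⁅y,z⁆, δ x w⁆ := by
    intro x y z w
    have e1 : δ ⁅x,y⁆ ⁅z,w⁆ =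
        ⁅x, ⁅z, δ y w⁆⁆ - ⁅x, ⁅w, δ y z⁆⁆ - (⁅y, ⁅z, δ x w⁆⁆ - ⁅y, ⁅w, δ x z⁆⁆) := by
      rw [hbd1 x y ⁅z,w⁆, hbd2 y z w, hbd2 x z w]
      simp only [lie_sub]
    have e2 : δ ⁅x,y⁆ ⁅z,w⁆ =
        ⁅z, ⁅x, δ y w⁆⁆ - ⁅z, ⁅y, δ x w⁆⁆ - (⁅w, ⁅x, δ y z⁆⁆ - ⁅w, ⁅y, δ x z⁆⁆) := by
      rw [hbd2 ⁅x,y⁆ z w, hbd1 x y w, hbd1 x y z]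
      simp only [lie_sub]
    have e3 := e1.symm.trans e2
    have e4 : ⁅⁅x,z⁆, δ y w⁆ + ⁅⁅y,w⁆, δ x z⁆ - (⁅⁅x,w⁆, δ y z⁆ + ⁅⁅y,z⁆, δ x w⁆)
        = (⁅x, ⁅z, δ y w⁆⁆ - ⁅x, ⁅w, δ y z⁆⁆ - (⁅y, ⁅z, δ x w⁆⁆ - ⁅y, ⁅w, δ x z⁆⁆))
          - (⁅z, ⁅x, δ y w⁆⁆ - ⁅z, ⁅y, δ x w⁆⁆ - (⁅w, ⁅x, δ y z⁆⁆ - ⁅w, ⁅y, δ x z⁆⁆)) := by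
      simp only [lie_lie]; abel
    rw [e3, sub_self] at e4
    exact sub_eq_zero.mp e4
  -- identity (J)
  have hJ : ∀ x y z w : L,
      ⁅⁅z,y⁆, δ x w⁆ + ⁅⁅x,w⁆, δ z y⁆ = ⁅⁅z,x⁆, δ y w⁆ + ⁅⁅y,w⁆, δ z x⁆ := by
    intro x y z w
    have h1 := hbd1 x y w
    have h2 := hbd1 x y z
    have h3 := hbd2 y z w
    have h4 := hbd2 x z w
    have h5 := hbd1 x y ⁅z,w⁆
    have h6 := hbd2 ⁅x,y⁆ z w
    have key : ⁅⁅z,y⁆, δ x w⁆ + ⁅⁅x,w⁆, δ z y⁆ - (⁅⁅z,x⁆, δ y w⁆ + ⁅⁅y,w⁆, δ z x⁆)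
        = -(⁅z, δ ⁅x,y⁆ w⁆ - ⁅w, δ ⁅x,y⁆ z⁆) + (⁅x, δ y ⁅z,w⁆⁆ - ⁅y, δ x ⁅z,w⁆⁆) := by
      rw [h1, h2, h3, h4, hskewsym z y, hskewsym z x]
      simp only [lie_sub, sub_lie, lie_neg, neg_lie, lie_lie]
      abel
    rw [← h5, ← h6] at key
    have key2 : ⁅⁅z,y⁆, δ x w⁆ + ⁅⁅x,w⁆, δ z y⁆
        - (⁅⁅z,x⁆, δ y w⁆ + ⁅⁅y,w⁆, δ z x⁆) = 0 := by rw [key]; abel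
    exact sub_eq_zero.mp key2
  -- identity (N)
  have hN : ∀ x y z w : L, ⁅⁅z,w⁆, δ x y⁆ = -⁅⁅x,y⁆, δ z w⁆ := by
    intro x y z w
    have hα := hI z x w y
    have hβ := hI z y x w
    have hQ := hJ x y z w
    have hyx : (⁅y,x⁆ : L) = -⁅x,y⁆ := by rw [← lie_skew]
    have hR : ⁅⁅z,w⁆, δ y x⁆ + ⁅⁅y,x⁆, δ z w⁆
        = -(⁅⁅z,w⁆, δ x y⁆ + ⁅⁅x,y⁆, δ z w⁆) := by
      rw [hskewsym y x, hyx]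
      simp only [lie_neg, neg_lie]
      abel
    have hsum : (⁅⁅z,w⁆, δ x y⁆ + ⁅⁅x,y⁆, δ z w⁆)
        + (⁅⁅z,w⁆, δ x y⁆ + ⁅⁅x,y⁆, δ z w⁆) = 0 := by
      nth_rewrite 1 [hα]
      rw [hQ, hβ, hR]
      abel
    exact eq_neg_of_add_eq_zero_left (half _ hsum)
  -- bracket as a bilinear map, and lifts to the tensor product
  set B : L →ₗ[ℂ] L →ₗ[ℂ] L := LinearMap.mk₂ ℂ (fun x y => ⁅x,y⁆)
    (fun _ _ _ => add_lie _ _ _) (fun _ _ _ => smul_lie _ _ _)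
    (fun _ _ _ => lie_add _ _ _) (fun _ _ _ => lie_smul _ _ _) with hBdef
  set T : L ⊗[ℂ] L →ₗ[ℂ] L := TensorProduct.lift B with hTdef
  set D : L ⊗[ℂ] L →ₗ[ℂ] M := TensorProduct.lift δ with hDdef
  have hT : ∀ a b : L, T (a ⊗ₜ[ℂ] b) = ⁅a, b⁆ := by
    intro a b; simp [hTdef, hBdef]
  have hD : ∀ a b : L, D (a ⊗ₜ[ℂ] b) = δ a b := by
    intro a b; simp [hDdef]
  -- Step B : lifted form of (N)
  have hB : ∀ (t : L ⊗[ℂ] L) (z w : L), ⁅⁅z, w⁆, D t⁆ = -⁅T t, δ z w⁆ := by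
    intro t z w
    induction t using TensorProduct.induction_on with
    | zero => simp
    | tmul a b => rw [hT, hD]; exact hN a b z w
    | add p q hp hq =>
        rw [map_add, map_add, lie_add, add_lie, hp, hq, neg_add]
  -- kernel inclusion
  have hker : ∀ t : L ⊗[ℂ] L, T t = 0 → D t = 0 := by
    intro t ht
    apply hZ
    intro c
    have hc : c ∈ Submodule.span ℂ {z : L | ∃ x y : L, z = ⁅x, y⁆} := by
      rw [hperf]; exact Submodule.mem_top
    induction hc using Submodule.span_induction with
    | mem a ha =>
        obtain ⟨x, y, rfl⟩ := ha
        rw [hB t x y, ht, zero_lie, neg_zero]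
    | zero => rw [zero_lie]
    | add a b _ _ iha ihb => rw [add_lie, iha, ihb, add_zero]
    | smul r a _ iha => rw [smul_lie, iha, smul_zero]
  -- (†) : δ x ⁅a,b⁆ = ⁅x, δ a b⁆
  have hdag : ∀ x a b : L, δ x ⁅a, b⁆ = ⁅x, δ a b⁆ := by
    intro x a b
    have hπ : T (x ⊗ₜ[ℂ] ⁅a,b⁆ - ⁅x,a⁆ ⊗ₜ[ℂ] b - a ⊗ₜ[ℂ] ⁅x,b⁆) = 0 := by
      rw [map_sub, map_sub, hT, hT, hT, leibniz_lie]
      abel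
    have hDπ := hker _ hπ
    rw [map_sub, map_sub, hD, hD, hD] at hDπ
    -- hDπ : δ x ⁅a,b⁆ - δ ⁅x,a⁆ b - δ a ⁅x,b⁆ = 0
    have h1 := hbd1 x a b   -- δ ⁅x,a⁆ b = ⁅x, δ a b⁆ - ⁅a, δ x b⁆
    have h2 := hbd2 a x b   -- δ a ⁅x,b⁆ = ⁅x, δ a b⁆ - ⁅b, δ a x⁆
    have h5 : δ x ⁅a,b⁆ = ⁅a, δ x b⁆ + ⁅b, δ a x⁆ := by
      rw [hbd2 x a b, hskewsym x a, lie_neg]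
      abel
    have e : (δ x ⁅a,b⁆ - ⁅x, δ a b⁆) + (δ x ⁅a,b⁆ - ⁅x, δ a b⁆)
        = (δ x ⁅a,b⁆ - δ ⁅x,a⁆ b - δ a ⁅x,b⁆)
          - ((⁅x, δ a b⁆ - ⁅a, δ x b⁆) - δ ⁅x,a⁆ b)
          - ((⁅x, δ a b⁆ - ⁅b, δ a x⁆) - δ a ⁅x,b⁆)
          - ((⁅a, δ x b⁆ + ⁅b, δ a x⁆) - δ x ⁅a,b⁆) := by
      abel
    rw [hDπ, ← h1, ← h2, ← h5] at e
    simp only [sub_self, sub_zero, zero_sub, neg_zero] at e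
    exact sub_eq_zero.mp (half _ e)
  -- surjectivity of T
  have hTsurj : Function.Surjective T := by
    rw [← LinearMap.range_eq_top, eq_top_iff, ← hperf]
    apply Submodule.span_le.mpr
    rintro _ ⟨x, y, rfl⟩
    exact ⟨x ⊗ₜ[ℂ] y, hT x y⟩
  obtain ⟨s, hs⟩ := Module.projective_lifting_property T LinearMap.id hTsurj
  have hsT : ∀ m : L, T (s m) = m := fun m => LinearMap.congr_fun hs m
  refine ⟨D.comp s, ?_, ?_⟩
  · -- centroid property
    intro x y
    have hby : (D.comp s) ⁅x, y⁆ = δ x y := by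
      have h0 : T (s ⁅x,y⁆ - x ⊗ₜ[ℂ] y) = 0 := by
        rw [map_sub, hsT, hT, sub_self]
      have h1 := hker _ h0
      rw [map_sub, hD, sub_eq_zero] at h1
      simpa using h1
    have hTD : ∀ t : L ⊗[ℂ] L, δ x (T t) = ⁅x, D t⁆ := by
      intro t
      induction t using TensorProduct.induction_on with
      | zero => simp
      | tmul a b => rw [hT, hD]; exact hdag x a b
      | add p q hp hq => rw [map_add, map_add, map_add, lie_add, hp, hq]
    calc (D.comp s) ⁅x, y⁆ = δ x y := hby
      _ = δ x (T (s y)) := by rw [hsT]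
      _ = ⁅x, D (s y)⁆ := hTD (s y)
      _ = ⁅x, (D.comp s) y⁆ := rfl
  · intro x y
    have h0 : T (s ⁅x,y⁆ - x ⊗ₜ[ℂ] y) = 0 := by
      rw [map_sub, hsT, hT, sub_self]
    have h1 := hker _ h0
    rw [map_sub, hD, sub_eq_zero] at h1
    simpa using h1.symm
end

section
/- Let b ∈ ℂ. If b = −1, then Cent_Vir(F_b) = ℂε, i.e. a linear map γ : Vir → F_b satisfies γ([x,y]) = x · γ(y) for all x, y ∈ Vir if and only if γ is a scalar multiple of ε; if b ≠ −1, then Cent_Vir(F_b) = {0}. -/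
theorem centroid_Vir_density
(b : ℂ)
    (V : Type) [LieRing V] [LieAlgebra ℂ V]
    (bV : Module.Basis (ℤ ⊕ Unit) ℂ V)
    (L : ℤ → V) (Cc : V)
    (hLdef : ∀ m : ℤ, L m = bV (Sum.inl m))
    (hCdef : Cc = bV (Sum.inr ()))
    (hLL : ∀ m n : ℤ, ⁅L m, L n⁆ = ((m : ℂ) - n) • L (m + n) +
      (if m + n = 0 then ((m : ℂ) ^ 3 - m) / 12 else 0) • Cc)
    (hLC : ∀ m : ℤ, ⁅L m, Cc⁆ = 0)
    (M : Type) [AddCommGroup M] [Module ℂ M] [LieRingModule V M] [LieModule ℂ V M]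
    (bM : Module.Basis ℤ ℂ M) (v : ℤ → M) (hvdef : ∀ i : ℤ, v i = bM i)
    (hLv : ∀ m i : ℤ, ⁅L m, v i⁆ = (-((i : ℂ) + b * m)) • v (m + i))
    (hCv : ∀ i : ℤ, ⁅Cc, v i⁆ = 0)
    (ε : V →ₗ[ℂ] M) (hεL : ∀ m : ℤ, ε (L m) = v m) (hεC : ε Cc = 0)
    (γ : V →ₗ[ℂ] M) :
    (b = -1 → ((∀ x y : V, γ ⁅x, y⁆ = ⁅x, γ y⁆) ↔ ∃ lam : ℂ, ∀ x : V, γ x = lam • ε x)) ∧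
    (b ≠ -1 → ((∀ x y : V, γ ⁅x, y⁆ = ⁅x, γ y⁆) ↔ γ = 0)) := by
  -- coordinates of basis vectors
  have hrepr_v : ∀ i j : ℤ, bM.repr (v i) j = if i = j then 1 else 0 := by
    intro i j
    rw [hvdef, bM.repr_self]
    exact Finsupp.single_apply
  -- cancellation of a nonzero basis vector
  have smul_cancel : ∀ (α β : ℂ) (k : ℤ), α • v k = β • v k → α = β := by
    intro α β k h
    have hv : v k ≠ 0 := by rw [hvdef]; exact bM.ne_zero k
    have h2 : (α - β) • v k = 0 := by rw [sub_smul, h, sub_self]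
    rcases smul_eq_zero.mp h2 with h' | h'
    · exact sub_eq_zero.mp h'
    · exact absurd h' hv
  -- a vector whose coordinates vanish away from n is a multiple of v n
  have single : ∀ (w : M) (n : ℤ), (∀ i, i ≠ n → bM.repr w i = 0) →
      w = bM.repr w n • v n := by
    intro w n h
    have h2 : bM.repr w = Finsupp.single n (bM.repr w n) := by
      ext i
      rcases eq_or_ne i n with rfl | hi
      · rw [Finsupp.single_eq_same]
      · rw [h i hi, Finsupp.single_apply, if_neg fun hh => hi hh.symm]
    have h3 := bM.repr.symm_apply_apply w
    rw [h2] at h3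
    conv_lhs => rw [← h3]
    rw [bM.repr_symm_single, hvdef]
  -- the action of L 0 is diagonal
  have diag : ∀ (w : M) (i : ℤ), bM.repr ⁅L 0, w⁆ i = (-(i : ℂ)) * bM.repr w i := by
    intro w i
    let T : M →ₗ[ℂ] M :=
      { toFun := fun u => ⁅L 0, u⁆
        map_add' := fun u₁ u₂ => lie_add _ _ _
        map_smul' := fun r u => lie_smul r _ u }
    have hT : (Finsupp.lapply i).comp ((bM.repr : M →ₗ[ℂ] (ℤ →₀ ℂ)).comp T)
        = (-(i : ℂ)) • ((Finsupp.lapply i).comp (bM.repr : M →ₗ[ℂ] (ℤ →₀ ℂ))) := by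
      refine bM.ext fun j => ?_
      simp only [LinearMap.comp_apply, LinearMap.smul_apply, Finsupp.lapply_apply,
        LinearEquiv.coe_coe]
      have hTj : T (bM j) = ⁅L 0, v j⁆ := by
        simp only [T, LinearMap.coe_mk, AddHom.coe_mk, hvdef]
      rw [hTj, hLv, map_smul]
      rcases eq_or_ne j i with rfl | hj
      · simp [hrepr_v]
      · simp [hrepr_v, hj]
    have h3 := LinearMap.congr_fun hT w
    simpa [T] using h3
  -- the coefficients
  set c : ℤ → ℂ := fun n => bM.repr (γ (L n)) n with hc
  set a : ℂ := bM.repr (γ Cc) 0 with ha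
  -- γ (L n) is a multiple of v n
  have exp : ∀ (_ : ∀ x y : V, γ ⁅x, y⁆ = ⁅x, γ y⁆) (n : ℤ), γ (L n) = c n • v n := by
    intro hγ n
    refine single (γ (L n)) n fun i hi => ?_
    have h0 := hγ (L 0) (L n)
    have hbr : ⁅L 0, L n⁆ = (-(n : ℂ)) • L n := by
      rw [hLL]
      simp
    rw [hbr, map_smul] at h0
    have h1 := congrArg (fun f => bM.repr f i) h0
    simp only [map_smul, Finsupp.smul_apply, smul_eq_mul] at h1
    rw [diag] at h1
    have h2 : ((i : ℂ) - n) * bM.repr (γ (L n)) i = 0 := by linear_combination h1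
    have hin : ((i : ℂ) - n) ≠ 0 := by
      intro hcon
      apply hi
      exact_mod_cast sub_eq_zero.mp hcon
    exact (mul_eq_zero.mp h2).resolve_left hin
  -- γ Cc is a multiple of v 0
  have expC : ∀ (_ : ∀ x y : V, γ ⁅x, y⁆ = ⁅x, γ y⁆), γ Cc = a • v 0 := by
    intro hγ
    refine single (γ Cc) 0 fun i hi => ?_
    have h0 := hγ (L 0) Cc
    rw [hLC, map_zero] at h0
    have h1 := congrArg (fun f => bM.repr f i) h0.symm
    simp only [map_zero, Finsupp.coe_zero, Pi.zero_apply] at h1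
    rw [diag] at h1
    have hi' : (-(i : ℂ)) ≠ 0 := by
      simp only [ne_eq, neg_eq_zero, Int.cast_eq_zero]
      exact hi
    exact (mul_eq_zero.mp h1).resolve_left hi'
  -- the master relation
  have main : ∀ (_ : ∀ x y : V, γ ⁅x, y⁆ = ⁅x, γ y⁆) (m n : ℤ),
      ((m : ℂ) - n) • (c (m + n) • v (m + n)) +
        (if m + n = 0 then ((m : ℂ) ^ 3 - m) / 12 else 0) • (a • v 0)
      = c n • ((-((n : ℂ) + b * m)) • v (m + n)) := by
    intro hγ m n
    have h := hγ (L m) (L n)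
    rw [hLL, map_add, map_smul, map_smul, exp hγ, exp hγ, expC hγ, lie_smul, hLv] at h
    exact h
  -- scalar relation when m + n ≠ 0
  have scalne : ∀ (_ : ∀ x y : V, γ ⁅x, y⁆ = ⁅x, γ y⁆) (m n : ℤ), m + n ≠ 0 →
      ((m : ℂ) - n) * c (m + n) = c n * (-((n : ℂ) + b * m)) := by
    intro hγ m n hmn
    have h := main hγ m n
    rw [if_neg hmn, zero_smul, add_zero, smul_smul, smul_smul] at h
    exact smul_cancel _ _ _ h
  -- scalar relation when n = -m
  have scal0 : ∀ (_ : ∀ x y : V, γ ⁅x, y⁆ = ⁅x, γ y⁆) (m : ℤ),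
      (2 * (m : ℂ)) * c 0 + ((m : ℂ) ^ 3 - m) / 12 * a = c (-m) * ((m : ℂ) - b * m) := by
    intro hγ m
    have h := main hγ m (-m)
    rw [add_neg_cancel, if_pos rfl, smul_smul, smul_smul, smul_smul, ← add_smul] at h
    have h2 := smul_cancel _ _ _ h
    push_cast at h2
    linear_combination h2
  refine ⟨fun hb => ⟨fun hγ => ?_, ?_⟩, fun hb => ⟨fun hγ => ?_, ?_⟩⟩
  · -- b = -1, forward
    have hcm : ∀ m : ℤ, c m = c 0 := by
      intro m
      by_cases hm : m = 0
      · rw [hm]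
      · have h := scalne hγ m 0 (by simpa using hm)
        simp only [add_zero, Int.cast_zero, sub_zero, zero_add, hb] at h
        have hm' : (m : ℂ) ≠ 0 := Int.cast_ne_zero.mpr hm
        have h2 : (m : ℂ) * c m = (m : ℂ) * c 0 := by linear_combination h
        exact mul_left_cancel₀ hm' h2
    have ha0 : a = 0 := by
      have h := scal0 hγ 2
      rw [hb, hcm (-2)] at h
      push_cast at h
      linear_combination 2 * h
    refine ⟨c 0, ?_⟩
    have hmap : γ = c 0 • ε := by
      refine bV.ext fun s => ?_
      cases s with
      | inl m =>
        rw [← hLdef, exp hγ m, hcm m, LinearMap.smul_apply, hεL]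
      | inr u =>
        cases u
        rw [← hCdef, expC hγ, ha0, LinearMap.smul_apply, hεC, zero_smul, smul_zero]
    intro x
    rw [hmap, LinearMap.smul_apply]
  · -- b = -1, reverse
    rintro ⟨lam, h⟩
    have εprop : ∀ x y : V, ε ⁅x, y⁆ = ⁅x, ε y⁆ := by
      have base : ∀ s t : ℤ ⊕ Unit, ε ⁅bV s, bV t⁆ = ⁅bV s, ε (bV t)⁆ := by
        rintro (m | ⟨⟩) (n | ⟨⟩)
        · rw [← hLdef, ← hLdef, hLL, map_add, map_smul, map_smul, hεL, hεC, hεL, hLv,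
            smul_zero, add_zero, hb]
          rw [show (-((n : ℂ) + (-1) * m)) = (m : ℂ) - n by ring]
        · rw [← hLdef, ← hCdef, hLC, map_zero, hεC, lie_zero]
        · rw [← hCdef, ← hLdef, hεL, hCv]
          have h1 : ⁅Cc, L n⁆ = 0 := by rw [← lie_skew, hLC, neg_zero]
          rw [h1, map_zero]
        · rw [← hCdef, hεC, lie_zero, lie_self, map_zero]
      let A : V →ₗ[ℂ] V →ₗ[ℂ] M :=
        { toFun := fun x =>
            { toFun := fun y => ε ⁅x, y⁆
              map_add' := fun y z => by simp [lie_add]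
              map_smul' := fun r y => by simp [lie_smul] }
          map_add' := fun x z => LinearMap.ext fun y => by
            simp [add_lie]
          map_smul' := fun r x => LinearMap.ext fun y => by
            simp [smul_lie] }
      let B : V →ₗ[ℂ] V →ₗ[ℂ] M :=
        { toFun := fun x =>
            { toFun := fun y => ⁅x, ε y⁆
              map_add' := fun y z => by simp [lie_add]
              map_smul' := fun r y => by simp [lie_smul] }
          map_add' := fun x z => LinearMap.ext fun y => by
            simp [add_lie]
          map_smul' := fun r x => LinearMap.ext fun y => by
            simp [smul_lie] }
      have hAB : A = B := bV.ext fun s => LinearMap.ext fun y => by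
        have h2 : ∀ z : V, A (bV s) z = B (bV s) z := by
          have h3 : A (bV s) = B (bV s) := bV.ext fun t => base s t
          intro z
          rw [h3]
        exact h2 y
      intro x y
      exact LinearMap.congr_fun (LinearMap.congr_fun hAB x) y
    intro x y
    rw [h, h, εprop, lie_smul]
  · -- b ≠ -1, forward
    have h1b : (1 : ℂ) + b ≠ 0 := fun h => hb (by linear_combination h)
    have hcm0 : ∀ m : ℤ, m ≠ 0 → c m = 0 := by
      intro m hm
      have h := scalne hγ m m (by omega)
      have hm' : (m : ℂ) ≠ 0 := Int.cast_ne_zero.mpr hm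
      have h2 : ((1 : ℂ) + b) * ((m : ℂ) * c m) = 0 := by linear_combination h
      rcases mul_eq_zero.mp h2 with h' | h'
      · exact absurd h' h1b
      · rcases mul_eq_zero.mp h' with h'' | h''
        · exact absurd h'' hm'
        · exact h''
    have hc0 : c 0 = 0 := by
      have h := scal0 hγ 1
      rw [hcm0 (-1) (by norm_num)] at h
      push_cast at h
      have h2 : (2 : ℂ) * c 0 = 0 := by linear_combination h
      exact (mul_eq_zero.mp h2).resolve_left (by norm_num)
    have ha0 : a = 0 := by
      have h := scal0 hγ 2
      rw [hcm0 (-2) (by norm_num), hc0] at h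
      push_cast at h
      linear_combination 2 * h
    refine bV.ext fun s => ?_
    cases s with
    | inl m =>
      rw [← hLdef, exp hγ m, LinearMap.zero_apply]
      rcases eq_or_ne m 0 with rfl | hm
      · rw [hc0, zero_smul]
      · rw [hcm0 m hm, zero_smul]
    | inr u =>
      cases u
      rw [← hCdef, expC hγ, ha0, LinearMap.zero_apply, zero_smul]
  · -- b ≠ -1, reverse
    rintro rfl x y
    simp
end

section
/- Let b ∈ ℂ and let δ : Vir × Vir → F_b be a skew-symmetric biderivation. Then δ(x, C) = 0 for all x ∈ Vir, and there exists λ ∈ ℂ such that δ(L_m, L_n) = λ(m − n)v_{m+n} for all m, n ∈ ℤ if b = −1, while δ(L_m, L_n) = 0 for all m, n ∈ ℤ if b ≠ −1. -/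
theorem skew_biderivation_Vir_density
(b : ℂ)
    (V : Type) [LieRing V] [LieAlgebra ℂ V]
    (bV : Module.Basis (ℤ ⊕ Unit) ℂ V)
    (L : ℤ → V) (Cc : V)
    (hLdef : ∀ m : ℤ, L m = bV (Sum.inl m))
    (hCdef : Cc = bV (Sum.inr ()))
    (hLL : ∀ m n : ℤ, ⁅L m, L n⁆ = ((m : ℂ) - n) • L (m + n) +
      (if m + n = 0 then ((m : ℂ) ^ 3 - m) / 12 else 0) • Cc)
    (hLC : ∀ m : ℤ, ⁅L m, Cc⁆ = 0)
    (M : Type) [AddCommGroup M] [Module ℂ M] [LieRingModule V M] [LieModule ℂ V M]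
    (bM : Module.Basis ℤ ℂ M) (v : ℤ → M) (hvdef : ∀ i : ℤ, v i = bM i)
    (hLv : ∀ m i : ℤ, ⁅L m, v i⁆ = (-((i : ℂ) + b * m)) • v (m + i))
    (hCv : ∀ i : ℤ, ⁅Cc, v i⁆ = 0)
    (δ : V →ₗ[ℂ] V →ₗ[ℂ] M)
    (hbd1 : ∀ x y z : V, δ ⁅x, y⁆ z = ⁅x, δ y z⁆ - ⁅y, δ x z⁆)
    (hbd2 : ∀ x y z : V, δ x ⁅y, z⁆ = ⁅y, δ x z⁆ - ⁅z, δ x y⁆)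
    (hskewsym : ∀ x y : V, δ x y = -δ y x) :
    (∀ x : V, δ x Cc = 0) ∧
    (b = -1 → ∃ lam : ℂ, ∀ m n : ℤ, δ (L m) (L n) = (lam * ((m : ℂ) - n)) • v (m + n)) ∧
    (b ≠ -1 → ∀ m n : ℤ, δ (L m) (L n) = 0) := by
  -- C acts as zero on M
  have hCw : ∀ w : M, ⁅Cc, w⁆ = 0 := by
    have h : LieModule.toEnd ℂ V M Cc = 0 := by
      apply bM.ext
      intro i
      rw [LieModule.toEnd_apply_apply, LinearMap.zero_apply, ← hvdef, hCv]
    intro w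
    have h2 : LieModule.toEnd ℂ V M Cc w = (0 : Module.End ℂ M) w := by rw [h]
    simpa [LieModule.toEnd_apply_apply] using h2
  -- δ x x = 0
  have hxx : ∀ x : V, δ x x = 0 := by
    intro x
    have h3 : (2 : ℂ) • δ x x = 0 := by
      rw [two_smul]
      exact eq_neg_iff_add_eq_zero.mp (hskewsym x x)
    have := smul_eq_zero.mp h3
    simpa using this.resolve_left (by norm_num)
  -- L m kills δ y Cc
  have hyC : ∀ (y : V) (m : ℤ), ⁅L m, δ y Cc⁆ = 0 := by
    intro y m
    have h := hbd2 y (L m) Cc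
    rw [hLC m, map_zero, hCw] at h
    simpa using h.symm
  -- δ (L k) Cc = 0
  have hLkC : ∀ k : ℤ, δ (L k) Cc = 0 := by
    intro k
    obtain ⟨m, n, hmn, hsum⟩ : ∃ m n : ℤ, m ≠ n ∧ m + n = k := by
      by_cases hk : k = 0
      · exact ⟨1, -1, by norm_num, by omega⟩
      · exact ⟨k, 0, hk, by omega⟩
    have h := hbd1 (L m) (L n) Cc
    rw [hLL m n, hyC, hyC, map_add, map_smul, map_smul] at h
    simp only [LinearMap.add_apply, LinearMap.smul_apply, hxx Cc, smul_zero, add_zero,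
      sub_self] at h
    rw [hsum] at h
    have hne : ((m : ℂ) - n) ≠ 0 := sub_ne_zero_of_ne (by exact_mod_cast hmn)
    exact (smul_eq_zero.mp h).resolve_left hne
  -- part 1
  have hxC : ∀ x : V, δ x Cc = 0 := by
    intro x
    have h : δ.flip Cc = 0 := by
      apply bV.ext
      rintro (m | u)
      · rw [LinearMap.flip_apply, LinearMap.zero_apply, ← hLdef, hLkC]
      · rw [LinearMap.flip_apply, LinearMap.zero_apply]
        cases u
        rw [← hCdef]
        exact hxx Cc
    have h2 := LinearMap.congr_fun h x
    simpa [LinearMap.flip_apply] using h2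
  have hCx : ∀ x : V, δ Cc x = 0 := fun x => by rw [hskewsym, hxC, neg_zero]
  -- biderivation equations on the L basis
  have E1 : ∀ m n p : ℤ, ((m : ℂ) - n) • δ (L (m + n)) (L p) =
      ⁅L m, δ (L n) (L p)⁆ - ⁅L n, δ (L m) (L p)⁆ := by
    intro m n p
    have h := hbd1 (L m) (L n) (L p)
    rw [hLL m n, map_add, map_smul, map_smul] at h
    rw [LinearMap.add_apply, LinearMap.smul_apply, LinearMap.smul_apply, hCx, smul_zero,
      add_zero] at h
    exact h
  have E2 : ∀ m n p : ℤ, ((n : ℂ) - p) • δ (L m) (L (n + p)) =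
      ⁅L n, δ (L m) (L p)⁆ - ⁅L p, δ (L m) (L n)⁆ := by
    intro m n p
    have h := hbd2 (L m) (L n) (L p)
    rw [hLL n p, map_add, map_smul, map_smul, hxC, smul_zero, add_zero] at h
    exact h
  -- coordinate helpers
  have hrep : ∀ (s : ℂ) (k : ℤ), bM.repr (s • v k) k = s := by
    intro s k
    rw [hvdef, map_smul, Module.Basis.repr_self]
    simp
  have hvinj : ∀ (s t : ℂ) (k : ℤ), s • v k = t • v k → s = t := by
    intro s t k h
    rw [← hrep s k, h, hrep]
  have hcoordL0 : ∀ (k : ℤ) (w : M), bM.repr ⁅L 0, w⁆ k = (-(k : ℂ)) * bM.repr w k := by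
    intro k w
    have hmaps : (bM.coord k).comp ((LieModule.toEnd ℂ V M (L 0)) : M →ₗ[ℂ] M)
        = (-(k : ℂ)) • bM.coord k := by
      apply bM.ext
      intro i
      rw [LinearMap.comp_apply, LieModule.toEnd_apply_apply, LinearMap.smul_apply]
      rw [← hvdef, hLv 0 i, map_smul]
      simp only [Module.Basis.coord_apply, hvdef, Module.Basis.repr_self, zero_add, Int.cast_zero, mul_zero,
        add_zero, smul_eq_mul]
      by_cases hik : i = k
      · subst hik; simp
      · simp [Finsupp.single_apply, hik]
    have h2 := LinearMap.congr_fun hmaps w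
    simpa [Module.Basis.coord_apply, LieModule.toEnd_apply_apply, smul_eq_mul] using h2
  -- eigenvectors of L 0 are multiples of the corresponding basis vector
  have fact1 : ∀ (m : ℤ) (w : M), ⁅L 0, w⁆ = (-(m : ℂ)) • w → w = (bM.repr w m) • v m := by
    intro m w hw
    have hk : ∀ k : ℤ, k ≠ m → bM.repr w k = 0 := by
      intro k hkm
      have h1 := hcoordL0 k w
      rw [hw, map_smul] at h1
      have h2 : (-(m : ℂ)) * bM.repr w k = (-(k : ℂ)) * bM.repr w k := by simpa using h1
      have h3 : ((k : ℂ) - m) * bM.repr w k = 0 := by linear_combination h2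
      have hne : ((k : ℂ) - m) ≠ 0 := sub_ne_zero_of_ne (by exact_mod_cast hkm)
      exact (mul_eq_zero.mp h3).resolve_left hne
    apply bM.repr.injective
    rw [hvdef, map_smul, Module.Basis.repr_self]
    ext k
    by_cases hkm : k = m
    · subst hkm; simp
    · simp [Finsupp.single_apply, hk k hkm, Ne.symm hkm]
  -- δ (L m) (L 0) is a multiple of v m
  have heig : ∀ m : ℤ, ⁅L 0, δ (L m) (L 0)⁆ = (-(m : ℂ)) • δ (L m) (L 0) := by
    intro m
    have h := E1 0 m 0
    rw [zero_add, hxx (L 0), lie_zero, sub_zero] at h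
    have hc : (((0 : ℤ) : ℂ)) - (m : ℂ) = -(m : ℂ) := by push_cast; ring
    rw [hc] at h
    exact h.symm
  have hm0 : ∀ m : ℤ, δ (L m) (L 0) = (bM.repr (δ (L m) (L 0)) m) • v m :=
    fun m => fact1 m _ (heig m)
  -- support lemma
  have hsupp : ∀ m n : ℤ, ∃ s : ℂ, δ (L m) (L n) = s • v (m + n) := by
    intro m n
    by_cases hmn : m = n
    · exact ⟨0, by rw [hmn, hxx, zero_smul]⟩
    · have A := E1 0 m n
      have B := E2 m 0 n
      rw [zero_add] at A B
      have C : ((m : ℂ) - n) • δ (L m) (L n)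
          = ⁅L m, δ (L 0) (L n)⁆ - ⁅L n, δ (L m) (L 0)⁆ := by
        linear_combination (norm := module) B - A
      rw [hskewsym (L 0) (L n), hm0 n, hm0 m, lie_neg, lie_smul, lie_smul, hLv, hLv,
        add_comm n m] at C
      set cm := bM.repr (δ (L m) (L 0)) m with hcm
      set cn := bM.repr (δ (L n) (L 0)) n with hcn
      have hne : ((m : ℂ) - n) ≠ 0 := sub_ne_zero_of_ne (by exact_mod_cast hmn)
      refine ⟨((m : ℂ) - n)⁻¹ * (cn * ((n : ℂ) + b * m) + cm * ((m : ℂ) + b * n)), ?_⟩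
      have h4 : δ (L m) (L n) = ((m : ℂ) - n)⁻¹ • (((m : ℂ) - n) • δ (L m) (L n)) :=
        (inv_smul_smul₀ hne _).symm
      rw [h4, C, mul_smul]
      module
  -- δ (L m) (L n) = φ(m,n) • v (m+n) where φ(m,n) is the (m+n) coordinate
  have hfφ : ∀ m n : ℤ, δ (L m) (L n) = (bM.repr (δ (L m) (L n)) (m + n)) • v (m + n) := by
    intro m n
    obtain ⟨s, hs⟩ := hsupp m n
    rw [hs, hrep]
  have hφskew : ∀ m n : ℤ, bM.repr (δ (L m) (L n)) (m + n)
      = - bM.repr (δ (L n) (L m)) (n + m) := by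
    intro m n
    rw [hskewsym (L m) (L n), map_neg, add_comm m n]
    simp
  -- scalar equation (I):  p * φ(m,p) = -((p + b m) * ψ p)  with ψ p = coord of δ (L p) (L 0)
  have hI : ∀ m p : ℤ, (p : ℂ) * bM.repr (δ (L m) (L p)) (m + p)
      = -(((p : ℂ) + b * m) * bM.repr (δ (L p) (L 0)) p) := by
    intro m p
    have h := E1 m 0 p
    rw [add_zero] at h
    rw [hskewsym (L 0) (L p), hm0 p] at h
    rw [hfφ m p] at h
    rw [lie_neg, lie_smul, lie_smul, hLv, hLv, zero_add] at h
    push_cast at h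
    have h2 : (((m : ℂ) - 0) * bM.repr (δ (L m) (L p)) (m + p)) • v (m + p)
        = (bM.repr (δ (L p) (L 0)) p * ((p : ℂ) + b * m)
            + bM.repr (δ (L m) (L p)) (m + p) * (((m : ℂ) + p) + b * 0)) • v (m + p) := by
      linear_combination (norm := module) h
    have h3 := hvinj _ _ _ h2
    linear_combination -h3
  -- the master scalar identity
  have hstar : ∀ m p : ℤ, (m : ℂ) * ((p : ℂ) + b * m) * bM.repr (δ (L p) (L 0)) p
      + (p : ℂ) * ((m : ℂ) + b * p) * bM.repr (δ (L m) (L 0)) m = 0 := by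
    intro m p
    have h1 := hI m p
    have h2 := hI p m
    have h3 := hφskew m p
    linear_combination (m : ℂ) * h1 + (p : ℂ) * h2 - (m : ℂ) * (p : ℂ) * h3
  have hψ00 : bM.repr (δ (L 0) (L 0)) 0 = 0 := by rw [hxx]; simp
  refine ⟨hxC, ?_, ?_⟩
  · -- b = -1
    intro hb
    subst hb
    refine ⟨bM.repr (δ (L 1) (L 0)) 1, ?_⟩
    have hlin : ∀ p : ℤ, bM.repr (δ (L p) (L 0)) p = bM.repr (δ (L 1) (L 0)) 1 * p := by
      intro p
      by_cases hp : p = 1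
      · subst hp; push_cast; ring
      · have h := hstar 1 p
        have h2 : ((1 : ℂ) - p) * ((1 : ℂ) * bM.repr (δ (L p) (L 0)) p
            - (p : ℂ) * bM.repr (δ (L 1) (L 0)) 1) = 0 := by
          push_cast at h ⊢
          linear_combination -h
        have hne : ((1 : ℂ) - p) ≠ 0 := sub_ne_zero_of_ne (by exact_mod_cast Ne.symm hp)
        have h4 := (mul_eq_zero.mp h2).resolve_left hne
        linear_combination h4
    intro m n
    by_cases hn : n = 0
    · subst hn
      rw [hm0 m, hlin m]
      push_cast
      ring_nf
    · have h := hI m n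
      have hncast : (n : ℂ) ≠ 0 := by exact_mod_cast hn
      rw [hlin n] at h
      have h5 : bM.repr (δ (L m) (L n)) (m + n)
          = bM.repr (δ (L 1) (L 0)) 1 * ((m : ℂ) - n) := by
        apply mul_left_cancel₀ hncast
        linear_combination h
      rw [hfφ m n, h5]
  · -- b ≠ -1
    intro hb
    have h1b : (1 : ℂ) + b ≠ 0 := fun h => hb (by linear_combination h)
    have hψ0 : ∀ m : ℤ, bM.repr (δ (L m) (L 0)) m = 0 := by
      intro m
      by_cases hm : m = 0
      · subst hm; exact hψ00
      · have h := hstar m m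
        have h2 : ((2 : ℂ) * m * m) * (((1 : ℂ) + b) * bM.repr (δ (L m) (L 0)) m) = 0 := by
          linear_combination h
        have hmc : (m : ℂ) ≠ 0 := by exact_mod_cast hm
        have h3 := (mul_eq_zero.mp h2).resolve_left (by
          simp [hmc])
        exact (mul_eq_zero.mp h3).resolve_left h1b
    intro m n
    by_cases hn : n = 0
    · subst hn
      rw [hm0 m, hψ0 m, zero_smul]
    · have h := hI m n
      rw [hψ0 n] at h
      have hncast : (n : ℂ) ≠ 0 := by exact_mod_cast hn
      have h2 : bM.repr (δ (L m) (L n)) (m + n) = 0 := by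
        have h3 : (n : ℂ) * bM.repr (δ (L m) (L n)) (m + n) = 0 := by linear_combination h
        exact (mul_eq_zero.mp h3).resolve_left hncast
      rw [hfφ m n, h2, zero_smul]
end

section
/- Let b ∈ ℂ and let δ : Vir × Vir → F_b be a symmetric biderivation. Then δ(x, C) = δ(C, x) = 0 for all x ∈ Vir, and there exists a finitely supported family (μ_k)_{k∈ℤ} of complex numbers such that: if b = 0, then δ(L_m, L_n) = Σ_{k∈ℤ} μ_k v_{m+n+k} for all m, n ∈ ℤ; if b = 1, then δ(L_m, L_n) = Σ_{k∈ℤ} (m + n + k)μ_k v_{m+n+k} for all m, n ∈ ℤ; and if b ∉ {0, 1}, then δ(L_m, L_n) = 0 for all m, n ∈ ℤ. -/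
private lemma vir_core (b : ℂ) (F : ℤ → ℤ → ℤ → ℂ)
    (hS : ∀ m n k, F m n k = F n m k)
    (hE : ∀ m n p k : ℤ, ((m : ℂ) - n) * F (m + n) p k
      = -(((k : ℂ) - m) + b * m) * F n p (k - m)
        + (((k : ℂ) - n) + b * n) * F m p (k - n)) :
    (b = 0 → ∀ m n k, F m n k = F 0 0 (k - m - n)) ∧
    (b = 1 → ∀ mu : ℤ → ℂ, mu 0 = F 1 0 1 →
      (∀ t, t ≠ 0 → mu t = F 0 0 t / ((t : ℤ) : ℂ)) →
      ∀ m n k, F m n k = (k : ℂ) * mu (k - m - n)) ∧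
    (b ≠ 0 → b ≠ 1 → ∀ m n k, F m n k = 0) := by
  have hA : ∀ n p k : ℤ, ((k : ℂ) - n) * F n p k
      = (((k : ℂ) - n) + b * n) * F 0 p (k - n) := by
    intro n p k
    have h := hE 0 n p k
    rw [zero_add, sub_zero] at h
    push_cast at h
    linear_combination h
  have hg0 : ∀ n p : ℤ, b * (n : ℂ) * F 0 p 0 = 0 := by
    intro n p
    have h := hA n p n
    rw [show n - n = 0 from sub_self n] at h
    linear_combination -h
  have hw1 : ∀ n p : ℤ, (p : ℂ) * F n p (n + p) = ((p : ℂ) + b * n) * F p 0 p := by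
    intro n p
    have h := hA n p (n + p)
    rw [show n + p - n = p by ring, hS 0 p] at h
    push_cast at h
    linear_combination h
  have hW : ∀ n p : ℤ, (n : ℂ) * ((p : ℂ) + b * n) * F p 0 p
      = (p : ℂ) * ((n : ℂ) + b * p) * F n 0 n := by
    intro n p
    have h1 := hw1 n p
    have h2 := hw1 p n
    rw [hS p n, show p + n = n + p by ring] at h2
    linear_combination (p : ℂ) * h2 - (n : ℂ) * h1
  have hR11 : (2 : ℂ) * F 0 0 0 = ((1 : ℂ) - b) * F (-1) 0 (-1) + ((1 : ℂ) - b) * F 1 0 1 := by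
    have h := hE 1 (-1) 0 0
    rw [show (1 : ℤ) + (-1) = 0 by ring, show (0 : ℤ) - 1 = -1 by ring,
      show (0 : ℤ) - (-1) = 1 by ring] at h
    push_cast at h
    linear_combination h
  refine ⟨?_, ?_, ?_⟩
  · -- case b = 0
    rintro rfl
    have hgoff : ∀ n p k : ℤ, k ≠ n → F n p k = F 0 p (k - n) := by
      intro n p k hkn
      have hc : ((k : ℂ) - n) ≠ 0 := sub_ne_zero.mpr (by exact_mod_cast hkn)
      have h' : ((k : ℂ) - n) * F n p k = ((k : ℂ) - n) * F 0 p (k - n) := by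
        linear_combination hA n p k
      exact mul_left_cancel₀ hc h'
    have hEm1 : F (-1) 0 (-1) = F 1 0 1 := by
      have h := hW 1 (-1)
      push_cast at h
      linear_combination -h
    have hE10 : F 1 0 1 = F 0 0 0 := by
      linear_combination (-1/2 : ℂ) * hR11 - (1/2 : ℂ) * hEm1
    have hEp : ∀ p : ℤ, F p 0 p = F 0 0 0 := by
      intro p
      rcases eq_or_ne p 0 with rfl | hp
      · rfl
      · have h := hW 1 p
        push_cast at h
        have hpc : (p : ℂ) ≠ 0 := by exact_mod_cast hp
        have h' : (p : ℂ) * F p 0 p = (p : ℂ) * F 0 0 0 := by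
          linear_combination h + (p : ℂ) * hE10
        exact mul_left_cancel₀ hpc h'
    have hg : ∀ p j : ℤ, F p 0 j = F 0 0 (j - p) := by
      intro p j
      rcases eq_or_ne j p with rfl | hjp
      · rw [sub_self]; exact hEp _
      · exact hgoff p 0 j hjp
    have hoff : ∀ m n k : ℤ, k ≠ m → F m n k = F 0 0 (k - m - n) := by
      intro m n k hkm
      rw [hgoff m n k hkm, hS 0 n, hg n (k - m)]
    have hdiag : ∀ n : ℤ, n ≠ 0 → F n n n = F 0 0 (-n) := by
      intro m hm0
      have h := hE (2 * m) (-m) m m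
      rw [show 2 * m + -m = m by ring, show m - 2 * m = -m by ring,
        show m - -m = 2 * m by ring, hS (-m) m, hS (2 * m) m] at h
      have v1 : F m (-m) (-m) = F 0 0 (-m) := by
        rw [hoff m (-m) (-m) (by omega), show -m - m - -m = -m by ring]
      have v2 : F m (2 * m) (2 * m) = F 0 0 (-m) := by
        rw [hoff m (2 * m) (2 * m) (by omega), show 2 * m - m - 2 * m = -m by ring]
      rw [v1, v2] at h
      push_cast at h
      have hmc : (3 : ℂ) * (m : ℂ) ≠ 0 :=
        mul_ne_zero (by norm_num) (by exact_mod_cast hm0)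
      have h' : (3 : ℂ) * (m : ℂ) * F m m m = (3 : ℂ) * (m : ℂ) * F 0 0 (-m) := by
        linear_combination h
      exact mul_left_cancel₀ hmc h'
    intro m n k
    by_cases hkm : k = m
    · by_cases hmn : m = n
      · by_cases hm0 : m = 0
        · rw [hkm, ← hmn, hm0]; norm_num
        · rw [hkm, ← hmn, show m - m - m = -m by ring]; exact hdiag m hm0
      · rw [hkm, hS m n, hoff n m m hmn,
          show m - n - m = m - m - n by ring]
    · exact hoff m n k hkm
  · -- case b = 1
    rintro rfl mu hmu0 hmut
    have h00 : F 0 0 0 = 0 := by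
      have h := hg0 1 0
      push_cast at h
      linear_combination h
    have hE2 : F 2 0 2 = 2 * F 1 0 1 := by
      have h := hW 1 2
      push_cast at h
      linear_combination (1/3 : ℂ) * h
    have hEm1 : F (-1) 0 (-1) = -F 1 0 1 := by
      have h := hW 2 (-1)
      push_cast at h
      linear_combination (1/2 : ℂ) * h - (1/2 : ℂ) * hE2
    have hEp : ∀ p : ℤ, F p 0 p = (p : ℂ) * F 1 0 1 := by
      intro p
      rcases eq_or_ne p 0 with rfl | hp0
      · push_cast; rw [h00]; ring
      · rcases eq_or_ne p (-1) with rfl | hpm1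
        · push_cast; rw [hEm1]; ring
        · have h := hW 1 p
          push_cast at h
          have hc : (p : ℂ) + 1 ≠ 0 := by
            intro hc
            apply hpm1
            have h2 : (p : ℂ) = ((-1 : ℤ) : ℂ) := by push_cast; linear_combination hc
            exact_mod_cast h2
          have h' : ((p : ℂ) + 1) * F p 0 p = ((p : ℂ) + 1) * ((p : ℂ) * F 1 0 1) := by
            linear_combination h
          exact mul_left_cancel₀ hc h'
    have hgform : ∀ p j : ℤ, F p 0 j = (j : ℂ) * mu (j - p) := by
      intro p j
      rcases eq_or_ne j p with rfl | hjp
      · rw [sub_self, hmu0]; exact hEp j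
      · rw [hmut (j - p) (by omega)]
        have h := hA p 0 j
        have hc : ((j : ℂ) - p) ≠ 0 := sub_ne_zero.mpr (by exact_mod_cast hjp)
        have hcast : ((j - p : ℤ) : ℂ) = (j : ℂ) - p := by push_cast; ring
        rw [hcast, ← mul_div_assoc, eq_div_iff hc]
        linear_combination h
    have hoff : ∀ m n k : ℤ, k ≠ m → F m n k = (k : ℂ) * mu (k - m - n) := by
      intro m n k hkm
      have h := hA m n k
      rw [hS 0 n, hgform n (k - m)] at h
      have hc : ((k : ℂ) - m) ≠ 0 := sub_ne_zero.mpr (by exact_mod_cast hkm)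
      have hcast : ((k - m : ℤ) : ℂ) = (k : ℂ) - m := by push_cast; ring
      rw [hcast] at h
      have h' : ((k : ℂ) - m) * F m n k = ((k : ℂ) - m) * ((k : ℂ) * mu (k - m - n)) := by
        linear_combination h
      exact mul_left_cancel₀ hc h'
    have hdiag : ∀ n : ℤ, n ≠ 0 → F n n n = (n : ℂ) * mu (-n) := by
      intro m hm0
      have h := hE (2 * m) (-m) m m
      rw [show 2 * m + -m = m by ring, show m - 2 * m = -m by ring,
        show m - -m = 2 * m by ring, hS (-m) m, hS (2 * m) m] at h
      have v1 : F m (-m) (-m) = ((-m : ℤ) : ℂ) * mu (-m) := by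
        rw [hoff m (-m) (-m) (by omega), show -m - m - -m = -m by ring]
      have v2 : F m (2 * m) (2 * m) = ((2 * m : ℤ) : ℂ) * mu (-m) := by
        rw [hoff m (2 * m) (2 * m) (by omega), show 2 * m - m - 2 * m = -m by ring]
      rw [v1, v2] at h
      push_cast at h
      have hmc : (3 : ℂ) * (m : ℂ) ≠ 0 :=
        mul_ne_zero (by norm_num) (by exact_mod_cast hm0)
      have h' : (3 : ℂ) * (m : ℂ) * F m m m
          = (3 : ℂ) * (m : ℂ) * ((m : ℂ) * mu (-m)) := by
        linear_combination h
      exact mul_left_cancel₀ hmc h'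
    intro m n k
    by_cases hkm : k = m
    · by_cases hmn : m = n
      · by_cases hm0 : m = 0
        · rw [hkm, ← hmn, hm0]; push_cast; rw [h00]; ring
        · rw [hkm, ← hmn, show m - m - m = -m by ring]; exact hdiag m hm0
      · rw [hkm, hS m n, hoff n m m hmn,
          show m - n - m = m - m - n by ring]
    · exact hoff m n k hkm
  · -- generic case
    intro hb0 hb1
    have h00 : ∀ p : ℤ, F 0 p 0 = 0 := by
      intro p
      have h := hg0 1 p
      push_cast at h
      rw [mul_one] at h
      exact (mul_eq_zero.mp h).resolve_left hb0
    have hh : ∀ j : ℤ, F 0 0 j = 0 := by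
      intro j
      rcases eq_or_ne j 0 with rfl | hj
      · exact h00 0
      · have h := hA (-j) 0 0
        rw [show (0 : ℤ) - -j = j by ring, hS (-j) 0, h00 (-j)] at h
        have hc : (j : ℂ) * ((1 : ℂ) - b) ≠ 0 :=
          mul_ne_zero (by exact_mod_cast hj) (sub_ne_zero.mpr (Ne.symm hb1))
        have h' : (j : ℂ) * ((1 : ℂ) - b) * F 0 0 j = 0 := by
          push_cast at h
          linear_combination -h
        exact (mul_eq_zero.mp h').resolve_left hc
    have hgoffz : ∀ n k : ℤ, k ≠ n → F n 0 k = 0 := by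
      intro n k hkn
      have h := hA n 0 k
      rw [hh (k - n)] at h
      have hc : ((k : ℂ) - n) ≠ 0 := sub_ne_zero.mpr (by exact_mod_cast hkn)
      have h' : ((k : ℂ) - n) * F n 0 k = ((k : ℂ) - n) * 0 := by linear_combination h
      exact mul_left_cancel₀ hc h'
    have hE1 : F 1 0 1 = 0 := by
      have hEm1 : F (-1) 0 (-1) = F 1 0 1 := by
        have h := hW 1 (-1)
        push_cast at h
        have hc : b - 1 ≠ 0 := sub_ne_zero.mpr hb1
        have h' : (b - 1) * F (-1) 0 (-1) = (b - 1) * F 1 0 1 := by linear_combination h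
        exact mul_left_cancel₀ hc h'
      have hc : (1 : ℂ) - b ≠ 0 := sub_ne_zero.mpr (Ne.symm hb1)
      have h' : ((1 : ℂ) - b) * F 1 0 1 = ((1 : ℂ) - b) * 0 := by
        linear_combination (-1/2 : ℂ) * hR11 + hh 0 - ((1 : ℂ)/2 - b/2) * hEm1
      exact mul_left_cancel₀ hc h'
    have hgood : ∀ q : ℤ, (q : ℂ) + b ≠ 0 → F q 0 q = 0 := by
      intro q hq
      have h := hW 1 q
      push_cast at h
      rw [hE1] at h
      have h' : ((q : ℂ) + b) * F q 0 q = ((q : ℂ) + b) * 0 := by linear_combination h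
      exact mul_left_cancel₀ hq h'
    have hEp : ∀ p : ℤ, F p 0 p = 0 := by
      intro p
      by_cases hpb : (p : ℂ) + b = 0
      · have hbp : b = -(p : ℂ) := by linear_combination hpb
        have hp0 : p ≠ 0 := by
          rintro rfl
          exact hb0 (by rw [hbp]; norm_num)
        obtain ⟨q, hq23, hqp⟩ : ∃ q : ℤ, (q = 2 ∨ q = 3) ∧ q ≠ p := by
          by_cases hp2 : p = 2
          · exact ⟨3, Or.inr rfl, by omega⟩
          · exact ⟨2, Or.inl rfl, by omega⟩
        have hEq : F q 0 q = 0 := by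
          apply hgood
          rw [hbp]
          intro hc
          apply hqp
          have h2 : (q : ℂ) = (p : ℂ) := by linear_combination hc
          exact_mod_cast h2
        have h := hW q p
        rw [hEq, hbp] at h
        have hc : (q : ℂ) * ((p : ℂ) + -(p : ℂ) * q) ≠ 0 := by
          have hqc : (q : ℂ) ≠ 0 := by
            rcases hq23 with rfl | rfl <;> norm_num
          apply mul_ne_zero hqc
          have he : (p : ℂ) + -(p : ℂ) * q = (p : ℂ) * (1 - q) := by ring
          rw [he]
          apply mul_ne_zero (by exact_mod_cast hp0)
          have he2 : ((1 : ℂ) - q) = ((1 - q : ℤ) : ℂ) := by push_cast; ring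
          rw [he2]
          rcases hq23 with rfl | rfl <;> norm_num
        have h' : (q : ℂ) * ((p : ℂ) + -(p : ℂ) * q) * F p 0 p
            = (q : ℂ) * ((p : ℂ) + -(p : ℂ) * q) * 0 := by linear_combination h
        exact mul_left_cancel₀ hc h'
      · exact hgood p hpb
    have hgz : ∀ q j : ℤ, F q 0 j = 0 := by
      intro q j
      rcases eq_or_ne j q with rfl | hjq
      · exact hEp _
      · exact hgoffz q j hjq
    have hoffz : ∀ m n k : ℤ, k ≠ m → F m n k = 0 := by
      intro m n k hkm
      have h := hA m n k
      rw [hS 0 n, hgz n (k - m)] at h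
      have hc : ((k : ℂ) - m) ≠ 0 := sub_ne_zero.mpr (by exact_mod_cast hkm)
      have h' : ((k : ℂ) - m) * F m n k = ((k : ℂ) - m) * 0 := by linear_combination h
      exact mul_left_cancel₀ hc h'
    have hdiag : ∀ n : ℤ, n ≠ 0 → F n n n = 0 := by
      intro m hm0
      have h := hE (2 * m) (-m) m m
      rw [show 2 * m + -m = m by ring, show m - 2 * m = -m by ring,
        show m - -m = 2 * m by ring, hS (-m) m, hS (2 * m) m,
        hoffz m (-m) (-m) (by omega), hoffz m (2 * m) (2 * m) (by omega)] at h
      push_cast at h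
      have hmc : (3 : ℂ) * (m : ℂ) ≠ 0 :=
        mul_ne_zero (by norm_num) (by exact_mod_cast hm0)
      have h' : (3 : ℂ) * (m : ℂ) * F m m m = (3 : ℂ) * (m : ℂ) * 0 := by
        linear_combination h
      exact mul_left_cancel₀ hmc h'
    intro m n k
    by_cases hkm : k = m
    · by_cases hmn : m = n
      · by_cases hm0 : m = 0
        · rw [hkm, ← hmn, hm0]; exact hh 0
        · rw [hkm, ← hmn]; exact hdiag m hm0
      · rw [hkm, hS m n]; exact hoffz n m m hmn
    · exact hoffz m n k hkm
attribute [local instance 100] LieRing.ofAssociativeRing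
theorem symmetric_biderivation_Vir_density
(b : ℂ)
    (V : Type) [LieRing V] [LieAlgebra ℂ V]
    (bV : Module.Basis (ℤ ⊕ Unit) ℂ V)
    (L : ℤ → V) (Cc : V)
    (hLdef : ∀ m : ℤ, L m = bV (Sum.inl m))
    (hCdef : Cc = bV (Sum.inr ()))
    (hLL : ∀ m n : ℤ, ⁅L m, L n⁆ = ((m : ℂ) - n) • L (m + n) +
      (if m + n = 0 then ((m : ℂ) ^ 3 - m) / 12 else 0) • Cc)
    (hLC : ∀ m : ℤ, ⁅L m, Cc⁆ = 0)
    (M : Type) [AddCommGroup M] [Module ℂ M] [LieRingModule V M] [LieModule ℂ V M]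
    (bM : Module.Basis ℤ ℂ M) (v : ℤ → M) (hvdef : ∀ i : ℤ, v i = bM i)
    (hLv : ∀ m i : ℤ, ⁅L m, v i⁆ = (-((i : ℂ) + b * m)) • v (m + i))
    (hCv : ∀ i : ℤ, ⁅Cc, v i⁆ = 0)
    (δ : V →ₗ[ℂ] V →ₗ[ℂ] M)
    (hbd1 : ∀ x y z : V, δ ⁅x, y⁆ z = ⁅x, δ y z⁆ - ⁅y, δ x z⁆)
    (hbd2 : ∀ x y z : V, δ x ⁅y, z⁆ = ⁅y, δ x z⁆ - ⁅z, δ x y⁆)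
    (hsym : ∀ x y : V, δ x y = δ y x) :
    (∀ x : V, δ x Cc = 0 ∧ δ Cc x = 0) ∧
    ∃ μ : ℤ →₀ ℂ,
      (b = 0 → ∀ m n : ℤ, δ (L m) (L n) = μ.sum fun k c => c • v (m + n + k)) ∧
      (b = 1 → ∀ m n : ℤ, δ (L m) (L n) =
        μ.sum fun k c => (((m : ℂ) + n + k) * c) • v (m + n + k)) ∧
      (b ≠ 0 → b ≠ 1 → ∀ m n : ℤ, δ (L m) (L n) = 0) := by
  classical
  -- brackets with Cc vanish
  have hxC : ∀ x : V, ⁅x, Cc⁆ = 0 := by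
    have hz : ((LieAlgebra.ad ℂ V).toLinearMap).flip Cc = 0 := by
      apply bV.ext
      rintro (m | ⟨⟩)
      · simp only [LinearMap.flip_apply, LieHom.coe_toLinearMap, LieAlgebra.ad_apply,
          LinearMap.zero_apply, ← hLdef]
        exact hLC m
      · simp only [LinearMap.flip_apply, LieHom.coe_toLinearMap, LieAlgebra.ad_apply,
          LinearMap.zero_apply, ← hCdef]
        exact lie_self Cc
    intro x
    have h := LinearMap.congr_fun hz x
    simpa using h
  have hCw : ∀ w : M, ⁅Cc, w⁆ = 0 := by
    have hz : (LieModule.toEnd ℂ V M Cc : M →ₗ[ℂ] M) = 0 := by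
      apply bM.ext
      intro i
      simp only [LieModule.toEnd_apply_apply, LinearMap.zero_apply, ← hvdef]
      exact hCv i
    intro w
    have h := LinearMap.congr_fun hz w
    simpa using h
  have hact0 : ∀ y z : V, ⁅y, δ Cc z⁆ = 0 := by
    intro y z
    have h1 := hbd1 Cc y z
    have hCy : ⁅Cc, y⁆ = 0 := by rw [← lie_skew, hxC y, neg_zero]
    rw [hCy, map_zero, LinearMap.zero_apply, hCw] at h1
    have h2 := h1.symm
    rwa [zero_sub, neg_eq_zero] at h2
  have hbr : ∀ y z : V, δ Cc ⁅y, z⁆ = 0 := by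
    intro y z
    rw [hbd2 Cc y z, hact0, hact0, sub_zero]
  have hb1m1 : ⁅L 1, L (-1)⁆ = (2 : ℂ) • L 0 := by
    rw [hLL]; norm_num
  have hδCL0 : δ Cc (L 0) = 0 := by
    have h := hbr (L 1) (L (-1))
    rw [hb1m1, map_smul] at h
    exact (smul_eq_zero.mp h).resolve_left (by norm_num)
  have hδCL : ∀ n : ℤ, δ Cc (L n) = 0 := by
    intro n
    rcases eq_or_ne n 0 with rfl | hn
    · exact hδCL0
    · have h := hbr (L 0) (L n)
      rw [hLL 0 n, zero_add, if_neg hn, zero_smul, add_zero, map_smul] at h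
      have hnc : (n : ℂ) ≠ 0 := by exact_mod_cast hn
      exact (smul_eq_zero.mp h).resolve_left (by simpa using hnc)
  have hb2m2 : ⁅L 2, L (-2)⁆ = (4 : ℂ) • L 0 + (2 : ℂ)⁻¹ • Cc := by
    rw [hLL]; norm_num
  have hδCC : δ Cc Cc = 0 := by
    have hCcEq : Cc = (2 : ℂ) • ⁅L 2, L (-2)⁆ - (8 : ℂ) • L 0 := by
      rw [hb2m2]; module
    calc δ Cc Cc = δ Cc ((2 : ℂ) • ⁅L 2, L (-2)⁆ - (8 : ℂ) • L 0) := by rw [← hCcEq]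
      _ = 0 := by
          rw [map_sub, map_smul, map_smul, hbr, hδCL0, smul_zero, smul_zero, sub_zero]
  have hδCfull : ∀ z : V, δ Cc z = 0 := by
    have hz : δ Cc = 0 := by
      apply bV.ext
      rintro (m | ⟨⟩)
      · rw [LinearMap.zero_apply, ← hLdef]; exact hδCL m
      · rw [LinearMap.zero_apply, ← hCdef]; exact hδCC
    intro z; rw [hz, LinearMap.zero_apply]
  have hδxC : ∀ x : V, δ x Cc = 0 := fun x => by rw [hsym]; exact hδCfull x
  -- repr of the action
  have reprLie : ∀ (m : ℤ) (w : M) (k : ℤ),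
      bM.repr ⁅L m, w⁆ k = -(((k : ℂ) - m) + b * m) * bM.repr w (k - m) := by
    intro m w k
    have hz : (Finsupp.lapply k ∘ₗ (bM.repr : M →ₗ[ℂ] (ℤ →₀ ℂ))
          ∘ₗ (LieModule.toEnd ℂ V M (L m) : M →ₗ[ℂ] M))
        = (-(((k : ℂ) - m) + b * m)) •
          (Finsupp.lapply (k - m) ∘ₗ (bM.repr : M →ₗ[ℂ] (ℤ →₀ ℂ))) := by
      apply bM.ext
      intro i
      simp only [LinearMap.comp_apply, LinearMap.smul_apply, Finsupp.lapply_apply,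
        LieModule.toEnd_apply_apply, LinearEquiv.coe_coe]
      rw [← hvdef i, hLv m i, hvdef (m + i), hvdef i]
      rw [map_smul, Finsupp.smul_apply, Module.Basis.repr_self, Module.Basis.repr_self]
      rw [Finsupp.single_apply, Finsupp.single_apply, smul_eq_mul, smul_eq_mul]
      by_cases hik : m + i = k
      · rw [if_pos hik, if_pos (by omega), mul_one, mul_one]
        have hi : (i : ℂ) = (k : ℂ) - m := by
          have : i = k - m := by omega
          rw [this]; push_cast; ring
        rw [hi]
      · rw [if_neg hik, if_neg (by omega), mul_zero, mul_zero]
    have h := LinearMap.congr_fun hz w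
    simpa using h
  -- repr of shifted sums
  have reprSum : ∀ (cf : ℤ → ℂ → ℂ), (∀ t, cf t 0 = 0) →
      (∀ t a a', cf t (a + a') = cf t a + cf t a') →
      ∀ (μ : ℤ →₀ ℂ) (s j : ℤ),
        bM.repr (μ.sum fun k a => cf k a • v (s + k)) j = cf (j - s) (μ (j - s)) := by
    intro cf h0 hadd μ s j
    induction μ using Finsupp.induction_linear with
    | zero => rw [Finsupp.sum_zero_index]; simp [h0]
    | add f g hf hg =>
        rw [Finsupp.sum_add_index (fun t _ => by rw [h0, zero_smul])
          (fun t _ a a' => by rw [hadd, add_smul])]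
        rw [map_add, Finsupp.add_apply, hf, hg, Finsupp.add_apply, hadd]
    | single t a =>
        rw [Finsupp.sum_single_index (by rw [h0, zero_smul])]
        rw [map_smul, hvdef, Module.Basis.repr_self, Finsupp.smul_apply,
          Finsupp.single_apply, Finsupp.single_apply, smul_eq_mul]
        by_cases hts : s + t = j
        · have ht : t = j - s := by omega
          subst ht
          rw [if_pos hts, if_pos rfl, mul_one]
        · rw [if_neg hts, if_neg (by omega), mul_zero, h0]
  -- the master scalar equation
  have hEmod : ∀ m n p : ℤ, ((m : ℂ) - n) • δ (L (m + n)) (L p)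
      = ⁅L m, δ (L n) (L p)⁆ - ⁅L n, δ (L m) (L p)⁆ := by
    intro m n p
    have h1 := hbd1 (L m) (L n) (L p)
    rw [hLL m n, map_add, map_smul, map_smul, LinearMap.add_apply, LinearMap.smul_apply,
      LinearMap.smul_apply, hδCfull, smul_zero, add_zero] at h1
    exact h1
  have hE : ∀ m n p k : ℤ, ((m : ℂ) - n) * bM.repr (δ (L (m + n)) (L p)) k
      = -(((k : ℂ) - m) + b * m) * bM.repr (δ (L n) (L p)) (k - m)
        + (((k : ℂ) - n) + b * n) * bM.repr (δ (L m) (L p)) (k - n) := by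
    intro m n p k
    have h := congrArg (fun w => bM.repr w k) (hEmod m n p)
    simp only [map_smul, map_sub, Finsupp.smul_apply, Finsupp.sub_apply, smul_eq_mul] at h
    rw [reprLie m _ k, reprLie n _ k] at h
    linear_combination h
  obtain ⟨hcase0, hcase1, hcaseg⟩ := vir_core b (fun m n k => bM.repr (δ (L m) (L n)) k)
    (fun m n k => by simp only [hsym (L m) (L n)]) hE
  have hcase0' : b = 0 → ∀ m n k : ℤ, bM.repr (δ (L m) (L n)) k
      = bM.repr (δ (L 0) (L 0)) (k - m - n) := hcase0
  have hcase1' : b = 1 → ∀ mu : ℤ → ℂ, mu 0 = bM.repr (δ (L 1) (L 0)) 1 →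
      (∀ t, t ≠ 0 → mu t = bM.repr (δ (L 0) (L 0)) t / ((t : ℤ) : ℂ)) →
      ∀ m n k : ℤ, bM.repr (δ (L m) (L n)) k = (k : ℂ) * mu (k - m - n) := hcase1
  have hcaseg' : b ≠ 0 → b ≠ 1 → ∀ m n k : ℤ, bM.repr (δ (L m) (L n)) k = 0 := hcaseg
  refine ⟨fun x => ⟨hδxC x, hδCfull x⟩, ?_⟩
  by_cases hb0 : b = 0
  · refine ⟨bM.repr (δ (L 0) (L 0)), ?_, ?_, ?_⟩
    · intro _ m n
      apply bM.repr.injective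
      ext j
      have hR : bM.repr ((bM.repr (δ (L 0) (L 0))).sum fun k c => c • v (m + n + k)) j
          = bM.repr (δ (L 0) (L 0)) (j - (m + n)) :=
        reprSum (fun _ a => a) (fun _ => rfl) (fun _ _ _ => rfl)
          (bM.repr (δ (L 0) (L 0))) (m + n) j
      rw [hR, show j - (m + n) = j - m - n by ring]
      exact hcase0' hb0 m n j
    · intro hb1
      exact absurd (hb0.symm.trans hb1) (by norm_num)
    · intro hb _
      exact absurd hb0 hb
  · by_cases hb1 : b = 1
    · refine ⟨Finsupp.onFinset (insert 0 (bM.repr (δ (L 0) (L 0))).support)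
        (fun t => if t = 0 then bM.repr (δ (L 1) (L 0)) 1
          else bM.repr (δ (L 0) (L 0)) t / ((t : ℤ) : ℂ)) ?_, ?_, ?_, ?_⟩
      · intro a ha
        by_cases ha0 : a = 0
        · simp [ha0]
        · have ha' : bM.repr (δ (L 0) (L 0)) a / ((a : ℤ) : ℂ) ≠ 0 := by
            simpa [ha0] using ha
          have hz : bM.repr (δ (L 0) (L 0)) a ≠ 0 := fun hz => ha' (by rw [hz, zero_div])
          exact Finset.mem_insert_of_mem (Finsupp.mem_support_iff.mpr hz)
      · intro h0; exact absurd h0 hb0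
      · intro _ m n
        set μ : ℤ →₀ ℂ := Finsupp.onFinset (insert 0 (bM.repr (δ (L 0) (L 0))).support)
          (fun t => if t = 0 then bM.repr (δ (L 1) (L 0)) 1
            else bM.repr (δ (L 0) (L 0)) t / ((t : ℤ) : ℂ)) (by
          intro a ha
          by_cases ha0 : a = 0
          · simp [ha0]
          · have ha' : bM.repr (δ (L 0) (L 0)) a / ((a : ℤ) : ℂ) ≠ 0 := by
              simpa [ha0] using ha
            have hz : bM.repr (δ (L 0) (L 0)) a ≠ 0 := fun hz => ha' (by rw [hz, zero_div])
            exact Finset.mem_insert_of_mem (Finsupp.mem_support_iff.mpr hz)) with hμdef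
        have hμ : ∀ t : ℤ, μ t = if t = 0 then bM.repr (δ (L 1) (L 0)) 1
            else bM.repr (δ (L 0) (L 0)) t / ((t : ℤ) : ℂ) := fun t => rfl
        have hmu0 : (⇑μ : ℤ → ℂ) 0 = bM.repr (δ (L 1) (L 0)) 1 := by rw [hμ 0, if_pos rfl]
        have hmut : ∀ t, t ≠ 0 → (⇑μ : ℤ → ℂ) t
            = bM.repr (δ (L 0) (L 0)) t / ((t : ℤ) : ℂ) := fun t ht => by
          rw [hμ t, if_neg ht]
        have key := hcase1' hb1 (⇑μ) hmu0 hmut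
        apply bM.repr.injective
        ext j
        have hR : bM.repr (μ.sum fun k c => (((m : ℂ) + n + k) * c) • v (m + n + k)) j
            = ((m : ℂ) + n + ((j - (m + n) : ℤ) : ℂ)) * μ (j - (m + n)) :=
          reprSum (fun k a => ((m : ℂ) + n + k) * a) (fun t => mul_zero _)
            (fun t a a' => by ring) μ (m + n) j
        rw [hR, show j - (m + n) = j - m - n by ring, key m n j]
        push_cast
        ring
      · intro _ hbn1
        exact absurd hb1 hbn1
    · refine ⟨0, fun h0 => absurd h0 hb0, fun h1 => absurd h1 hb1, ?_⟩
      intro _ _ m n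
      apply bM.repr.injective
      ext j
      simp only [map_zero, Finsupp.coe_zero, Pi.zero_apply]
      exact hcaseg' hb0 hb1 m n j
end

section
/- Every symmetric biderivation δ : Vir × Vir → Vir of the Virasoro algebra (where Vir acts on itself by the adjoint action) is trivial, i.e. δ(x, y) = 0 for all x, y ∈ Vir. -/
theorem symmetric_biderivation_Vir_trivial
    (V : Type) [LieRing V] [LieAlgebra ℂ V]
    (bV : Module.Basis (ℤ ⊕ Unit) ℂ V)
    (L : ℤ → V) (Cc : V)
    (hLdef : ∀ m : ℤ, L m = bV (Sum.inl m))
    (hCdef : Cc = bV (Sum.inr ()))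
    (hLL : ∀ m n : ℤ, ⁅L m, L n⁆ = ((m : ℂ) - n) • L (m + n) +
      (if m + n = 0 then ((m : ℂ) ^ 3 - m) / 12 else 0) • Cc)
    (hLC : ∀ m : ℤ, ⁅L m, Cc⁆ = 0)
    (δ : V →ₗ[ℂ] V →ₗ[ℂ] V)
    (hbd1 : ∀ x y z : V, δ ⁅x, y⁆ z = ⁅x, δ y z⁆ - ⁅y, δ x z⁆)
    (hbd2 : ∀ x y z : V, δ x ⁅y, z⁆ = ⁅y, δ x z⁆ - ⁅z, δ x y⁆)
    (hsym : ∀ x y : V, δ x y = δ y x) :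
    ∀ x y : V, δ x y = 0 := by
  -- coordinate formulas for bracketing with L m
  have hrep1 : ∀ (m k : ℤ) (v : V), bV.repr ⁅L m, v⁆ (Sum.inl k)
      = (2*(m:ℂ) - k) * bV.repr v (Sum.inl (k - m)) := by
    intro m k v
    have key : (bV.coord (Sum.inl k)) ∘ₗ (LieAlgebra.ad ℂ V (L m) : V →ₗ[ℂ] V)
        = (2*(m:ℂ) - k) • bV.coord (Sum.inl (k - m)) := by
      apply bV.ext
      rintro (j | ⟨⟩)
      · simp only [LinearMap.comp_apply, LieAlgebra.ad_apply, LinearMap.smul_apply,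
          Module.Basis.coord_apply, Module.Basis.repr_self, smul_eq_mul]
        rw [← hLdef, hLL, map_add, map_smul, map_smul]
        rw [hLdef, hCdef]
        simp only [Module.Basis.repr_self, Finsupp.add_apply, Finsupp.smul_apply,
          Finsupp.single_apply, Sum.inl.injEq, smul_eq_mul, reduceCtorEq, if_false,
          mul_zero, add_zero]
        split_ifs with h1 h2
        · subst h1; push_cast; ring
        · exfalso; omega
        · exfalso; omega
        · ring
      · simp only [LinearMap.comp_apply, LieAlgebra.ad_apply, LinearMap.smul_apply,
          Module.Basis.coord_apply, Module.Basis.repr_self, smul_eq_mul]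
        rw [← hCdef, hLC]
        simp [Finsupp.single_apply]
    have h := LinearMap.congr_fun key v
    simpa [Module.Basis.coord_apply] using h
  have hrep2 : ∀ (m : ℤ) (v : V), bV.repr ⁅L m, v⁆ (Sum.inr ())
      = (((m:ℂ)^3 - m)/12) * bV.repr v (Sum.inl (-m)) := by
    intro m v
    have key : (bV.coord (Sum.inr ())) ∘ₗ (LieAlgebra.ad ℂ V (L m) : V →ₗ[ℂ] V)
        = (((m:ℂ)^3 - m)/12) • bV.coord (Sum.inl (-m)) := by
      apply bV.ext
      rintro (j | ⟨⟩)
      · simp only [LinearMap.comp_apply, LieAlgebra.ad_apply, LinearMap.smul_apply,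
          Module.Basis.coord_apply, Module.Basis.repr_self, smul_eq_mul]
        rw [← hLdef, hLL, map_add, map_smul, map_smul]
        rw [hLdef, hCdef]
        simp only [Module.Basis.repr_self, Finsupp.add_apply, Finsupp.smul_apply,
          Finsupp.single_apply, Sum.inl.injEq, Sum.inr.injEq, smul_eq_mul,
          reduceCtorEq, if_false, mul_zero, zero_add, if_true]
        split_ifs with h1 h2
        · push_cast; ring
        · exfalso; omega
        · exfalso; omega
        · ring
      · simp only [LinearMap.comp_apply, LieAlgebra.ad_apply, LinearMap.smul_apply,
          Module.Basis.coord_apply, Module.Basis.repr_self, smul_eq_mul]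
        rw [← hCdef, hLC]
        simp [Finsupp.single_apply]
    have h := LinearMap.congr_fun key v
    simpa [Module.Basis.coord_apply] using h
  -- zero test
  have hzero : ∀ v : V, (∀ k : ℤ, bV.repr v (Sum.inl k) = 0) →
      bV.repr v (Sum.inr ()) = 0 → v = 0 := by
    intro v h1 h2
    have hr : bV.repr v = 0 := by
      ext i
      rcases i with k | ⟨⟩
      · exact h1 k
      · exact h2
    simpa using congrArg bV.repr.symm hr
  -- Cc is central
  have hC0 : ∀ v : V, ⁅v, Cc⁆ = 0 := by
    intro v
    have hv : v ∈ Submodule.span ℂ (Set.range bV) := by rw [Module.Basis.span_eq]; trivial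
    induction hv using Submodule.span_induction with
    | mem x hx =>
      obtain ⟨i, rfl⟩ := hx
      rcases i with m | ⟨⟩
      · rw [← hLdef]; exact hLC m
      · rw [← hCdef]; exact lie_self Cc
    | zero => simp
    | add x y _ _ hx hy => rw [add_lie, hx, hy, add_zero]
    | smul a x _ hx => rw [smul_lie, hx, smul_zero]
  have hCC : ∀ v : V, ⁅Cc, v⁆ = 0 := by
    intro v; rw [← lie_skew, hC0, neg_zero]
  -- δ x Cc is central
  have hcent : ∀ x y : V, ⁅y, δ x Cc⁆ = 0 := by
    intro x y
    have h := hbd2 x y Cc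
    rw [hC0 y, map_zero, hCC (δ x y), sub_zero] at h
    exact h.symm
  have hbrC : ∀ x y : V, δ ⁅x, y⁆ Cc = 0 := by
    intro x y
    rw [hbd1 x y Cc, hcent y x, hcent x y, sub_zero]
  have hL0m : ∀ m : ℤ, ⁅L 0, L m⁆ = (-(m:ℂ)) • L m := by
    intro m
    rw [hLL 0 m]
    norm_num
  have hdLC : ∀ m : ℤ, δ (L m) Cc = 0 := by
    intro m
    by_cases hm : m = 0
    · subst hm
      have h2 : ⁅L 1, L (-1)⁆ = (2:ℂ) • L 0 := by
        rw [hLL 1 (-1)]; norm_num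
      have h3 : L 0 = (2:ℂ)⁻¹ • ⁅L 1, L (-1)⁆ := by
        rw [h2, smul_smul]; norm_num
      rw [h3, map_smul, LinearMap.smul_apply, hbrC, smul_zero]
    · have h2 : L m = (-(m:ℂ))⁻¹ • ⁅L 0, L m⁆ := by
        rw [hL0m, smul_smul, inv_mul_cancel₀ (neg_ne_zero.mpr (Int.cast_ne_zero.mpr hm)),
          one_smul]
      rw [h2, map_smul, LinearMap.smul_apply, hbrC, smul_zero]
  have hdCC : δ Cc Cc = 0 := by
    have h2 : ⁅L 2, L (-2)⁆ = (4:ℂ) • L 0 + ((1:ℂ)/2) • Cc := by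
      rw [hLL 2 (-2)]; norm_num
    have hCc : Cc = (2:ℂ) • ⁅L 2, L (-2)⁆ - (8:ℂ) • L 0 := by
      rw [h2, smul_add, smul_smul, smul_smul]
      norm_num
    nth_rewrite 1 [hCc]
    rw [map_sub, map_smul, map_smul, LinearMap.sub_apply, LinearMap.smul_apply,
      LinearMap.smul_apply, hbrC, hdLC 0, smul_zero, smul_zero, sub_zero]
  -- equation (V)
  have hV : ∀ n : ℤ, (-(n:ℂ)) • δ (L 0) (L n)
      = ⁅L 0, δ (L 0) (L n)⁆ - ⁅L n, δ (L 0) (L 0)⁆ := by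
    intro n
    have h := hbd2 (L 0) (L 0) (L n)
    rw [hL0m n, map_smul] at h
    exact h
  -- its coefficients
  have hVI : ∀ n k : ℤ, ((n:ℂ) - k) * bV.repr (δ (L 0) (L n)) (Sum.inl k)
      = (2*(n:ℂ) - k) * bV.repr (δ (L 0) (L 0)) (Sum.inl (k - n)) := by
    intro n k
    have h := congrArg (fun v => bV.repr v (Sum.inl k)) (hV n)
    simp only [map_smul, map_sub, Finsupp.smul_apply, Finsupp.sub_apply, smul_eq_mul] at h
    rw [hrep1 0, hrep1 n, sub_zero] at h
    push_cast at h
    linear_combination -h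
  have hVIc : ∀ n : ℤ, (-(n:ℂ)) * bV.repr (δ (L 0) (L n)) (Sum.inr ())
      = -(((n:ℂ)^3 - n)/12) * bV.repr (δ (L 0) (L 0)) (Sum.inl (-n)) := by
    intro n
    have h := congrArg (fun v => bV.repr v (Sum.inr ())) (hV n)
    simp only [map_smul, map_sub, Finsupp.smul_apply, Finsupp.sub_apply, smul_eq_mul] at h
    rw [hrep2 0, hrep2 n] at h
    push_cast at h
    linear_combination h
  -- equation (II)
  have hII : ∀ m n : ℤ, (-(m:ℂ)) • δ (L m) (L n)
      = ⁅L 0, δ (L m) (L n)⁆ - ⁅L m, δ (L 0) (L n)⁆ := by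
    intro m n
    have h := hbd1 (L 0) (L m) (L n)
    rw [hL0m m, map_smul, LinearMap.smul_apply] at h
    exact h
  -- equation (D)
  have hD : ∀ m n : ℤ, ⁅L m, δ (L 0) (L n)⁆ - ⁅L n, δ (L 0) (L m)⁆
      = ((m:ℂ) - n) • δ (L 0) (L (m + n)) := by
    intro m n
    have h := hbd2 (L 0) (L m) (L n)
    rw [hLL m n, map_add, map_smul, map_smul, hdLC 0, smul_zero, add_zero] at h
    exact h.symm
  -- equation (IV)
  have hIV : ∀ m n : ℤ, m ≠ n → δ (L m) (L n) = δ (L 0) (L (m + n)) := by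
    intro m n hmn
    have h1 := hII m n
    have h2 := hII n m
    rw [hsym (L n) (L m)] at h2
    have h3 : ((n:ℂ) - m) • δ (L m) (L n) = ((n:ℂ) - m) • δ (L 0) (L (m + n)) := by
      have e1 : ((n:ℂ) - m) • δ (L m) (L n)
          = (-(m:ℂ)) • δ (L m) (L n) - (-(n:ℂ)) • δ (L m) (L n) := by
        rw [← sub_smul]; congr 1; ring
      rw [e1, h1, h2]
      have e2 : ∀ (A B C : V), (A - B) - (A - C) = C - B := by intros; abel
      rw [e2]
      have hd := hD n m
      rw [show n + m = m + n by ring] at hd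
      exact hd
    have hne : ((n:ℂ) - m) ≠ 0 := by
      rw [sub_ne_zero]
      exact_mod_cast hmn.symm
    have h4 := congrArg (fun v => ((n:ℂ) - m)⁻¹ • v) h3
    simpa [smul_smul, inv_mul_cancel₀ hne] using h4
  -- equation (VII)
  have hVII : ∀ m n : ℤ, m ≠ n → (n:ℂ) • δ (L 0) (L (m + n)) =
      ⁅L (m + n), δ (L 0) (L 0)⁆ - ⁅L m, δ (L 0) (L n)⁆ := by
    intro m n hmn
    have h1 := hII m n
    rw [hIV m n hmn] at h1
    have h2 := hV (m + n)
    have h3 : (n:ℂ) • δ (L 0) (L (m + n)) = (-(m:ℂ)) • δ (L 0) (L (m + n))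
        - (-(((m + n : ℤ)):ℂ)) • δ (L 0) (L (m + n)) := by
      rw [← sub_smul]; congr 1; push_cast; ring
    rw [h3, h1, h2]
    abel
  -- coefficients of (VII)
  have hE : ∀ m n k : ℤ, m ≠ n → (n:ℂ) * bV.repr (δ (L 0) (L (m + n))) (Sum.inl k)
      = (2*(((m + n : ℤ)):ℂ) - k) * bV.repr (δ (L 0) (L 0)) (Sum.inl (k - (m + n)))
        - (2*(m:ℂ) - k) * bV.repr (δ (L 0) (L n)) (Sum.inl (k - m)) := by
    intro m n k hmn
    have h := congrArg (fun v => bV.repr v (Sum.inl k)) (hVII m n hmn)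
    simp only [map_smul, map_sub, Finsupp.smul_apply, Finsupp.sub_apply, smul_eq_mul] at h
    rw [hrep1 (m + n), hrep1 m] at h
    exact h
  have hEc : ∀ m n : ℤ, m ≠ n → (n:ℂ) * bV.repr (δ (L 0) (L (m + n))) (Sum.inr ())
      = (((((m + n : ℤ)):ℂ))^3 - (((m + n : ℤ)):ℂ))/12
          * bV.repr (δ (L 0) (L 0)) (Sum.inl (-(m + n)))
        - ((m:ℂ)^3 - m)/12 * bV.repr (δ (L 0) (L n)) (Sum.inl (-m)) := by
    intro m n hmn
    have h := congrArg (fun v => bV.repr v (Sum.inr ())) (hVII m n hmn)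
    simp only [map_smul, map_sub, Finsupp.smul_apply, Finsupp.sub_apply, smul_eq_mul] at h
    rw [hrep2 (m + n), hrep2 m] at h
    exact h
  -- all L-coefficients of δ(L0,L0) vanish
  have hA0 : ∀ t : ℤ, bV.repr (δ (L 0) (L 0)) (Sum.inl t) = 0 := by
    intro t
    by_cases ht : t = 0
    · subst ht
      have h := hVI 1 1
      rw [show ((1:ℤ) - 1) = 0 by norm_num] at h
      push_cast at h
      linear_combination -h
    · have e := hE 1 2 (t + 3) (by norm_num)
      have v2 := hVI 2 (t + 2)
      have v3 := hVI 3 (t + 3)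
      rw [show ((1:ℤ) + 2) = 3 by norm_num, show t + 3 - 3 = t by ring,
        show t + 3 - 1 = t + 2 by ring] at e
      rw [show t + 2 - 2 = t by ring] at v2
      rw [show t + 3 - 3 = t by ring] at v3
      push_cast at e v2 v3
      have h4 : (4:ℂ) * bV.repr (δ (L 0) (L 0)) (Sum.inl t) = 0 := by
        linear_combination (-(t:ℂ)) * e + (1 + (t:ℂ)) * v2 + (-2:ℂ) * v3
      exact (mul_eq_zero.mp h4).resolve_left (by norm_num)
  -- (VIII): diagonal recursion
  have hVIII : ∀ m n : ℤ, m ≠ n →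
      (n:ℂ) * bV.repr (δ (L 0) (L (m + n))) (Sum.inl (m + n))
      = -((m:ℂ) - n) * bV.repr (δ (L 0) (L n)) (Sum.inl n) := by
    intro m n hmn
    have h := hE m n (m + n) hmn
    rw [show m + n - (m + n) = 0 by ring, show m + n - m = n by ring, hA0 0] at h
    push_cast at h
    linear_combination h
  have ha3 : bV.repr (δ (L 0) (L 3)) (Sum.inl 3) = 0 := by
    have h32 := hVIII 1 2 (by norm_num)
    have h23 := hVIII (-1) 3 (by norm_num)
    rw [show ((1:ℤ) + 2) = 3 by norm_num] at h32
    rw [show ((-1:ℤ) + 3) = 2 by norm_num] at h23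
    push_cast at h32 h23
    have h2 : (2:ℂ) * bV.repr (δ (L 0) (L 3)) (Sum.inl 3) = 0 := by
      linear_combination 3 * h32 + h23
    exact (mul_eq_zero.mp h2).resolve_left (by norm_num)
  have ha1 : bV.repr (δ (L 0) (L 1)) (Sum.inl 1) = 0 := by
    have h31 := hVIII 2 1 (by norm_num)
    rw [show ((2:ℤ) + 1) = 3 by norm_num] at h31
    push_cast at h31
    linear_combination h31 - ha3
  have hAdiag : ∀ t : ℤ, bV.repr (δ (L 0) (L t)) (Sum.inl t) = 0 := by
    intro t
    by_cases ht : t = 2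
    · subst ht
      have h32 := hVIII 1 2 (by norm_num)
      have h23 := hVIII (-1) 3 (by norm_num)
      rw [show ((1:ℤ) + 2) = 3 by norm_num] at h32
      rw [show ((-1:ℤ) + 3) = 2 by norm_num] at h23
      push_cast at h32 h23
      have h2 : (3:ℂ) * bV.repr (δ (L 0) (L 2)) (Sum.inl 2) = 0 := by
        linear_combination h23 + 4 * ha3
      exact (mul_eq_zero.mp h2).resolve_left (by norm_num)
    · have h := hVIII (t - 1) 1 (by omega)
      rw [show t - 1 + 1 = t by ring] at h
      rw [ha1] at h
      push_cast at h
      linear_combination h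
  have hAall : ∀ n k : ℤ, bV.repr (δ (L 0) (L n)) (Sum.inl k) = 0 := by
    intro n k
    by_cases hk : k = n
    · subst hk; exact hAdiag k
    · have h := hVI n k
      rw [hA0] at h
      have hnk : ((n:ℂ) - k) ≠ 0 := by
        rw [sub_ne_zero]
        intro hh
        exact hk (by exact_mod_cast hh.symm)
      rw [mul_zero] at h
      exact (mul_eq_zero.mp h).resolve_left hnk
  have hBall : ∀ n : ℤ, bV.repr (δ (L 0) (L n)) (Sum.inr ()) = 0 := by
    intro n
    by_cases hn : n = 0
    · subst hn
      have h := hEc 1 (-1) (by norm_num)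
      rw [show ((1:ℤ) + -1) = 0 by norm_num] at h
      rw [hAall, hAall] at h
      push_cast at h
      linear_combination -h
    · have h := hVIc n
      rw [hAall] at h
      have hnC : (-(n:ℂ)) ≠ 0 := neg_ne_zero.mpr (Int.cast_ne_zero.mpr hn)
      rw [mul_zero] at h
      exact (mul_eq_zero.mp h).resolve_left hnC
  have hu0 : ∀ n : ℤ, δ (L 0) (L n) = 0 := fun n =>
    hzero _ (fun k => hAall n k) (hBall n)
  have hoff : ∀ m n : ℤ, m ≠ n → δ (L m) (L n) = 0 := by
    intro m n hmn
    rw [hIV m n hmn, hu0]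
  -- diagonal terms
  have hdiagbr : ∀ n : ℤ, ⁅L 0, δ (L n) (L n)⁆ = (-(n:ℂ)) • δ (L n) (L n) := by
    intro n
    have h := hII n n
    rw [hu0 n, lie_zero, sub_zero] at h
    exact h.symm
  have hdiag : ∀ n : ℤ, δ (L n) (L n) = 0 := by
    intro n
    by_cases hn : n = 0
    · subst hn; exact hu0 0
    · have hP : ∀ k : ℤ, k ≠ n → bV.repr (δ (L n) (L n)) (Sum.inl k) = 0 := by
        intro k hk
        have h := congrArg (fun v => bV.repr v (Sum.inl k)) (hdiagbr n)
        simp only [map_smul, Finsupp.smul_apply, smul_eq_mul] at h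
        rw [hrep1 0, sub_zero] at h
        push_cast at h
        have hnk : ((n:ℂ) - k) ≠ 0 := by
          rw [sub_ne_zero]
          intro hh
          exact hk (by exact_mod_cast hh.symm)
        have h2 : ((n:ℂ) - k) * bV.repr (δ (L n) (L n)) (Sum.inl k) = 0 := by
          linear_combination h
        exact (mul_eq_zero.mp h2).resolve_left hnk
      have hbr : ⁅L (3*n + 1), δ (L n) (L n)⁆ = 0 := by
        have h := hbd2 (L n) (L n) (L (3*n + 1))
        rw [hLL n (3*n + 1), hoff n (3*n + 1) (by omega), lie_zero, map_add, map_smul,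
          map_smul, hoff n (n + (3*n + 1)) (by omega), hdLC n, smul_zero, smul_zero,
          add_zero, zero_sub] at h
        rw [← neg_eq_zero]
        exact h.symm
      have hPn : bV.repr (δ (L n) (L n)) (Sum.inl n) = 0 := by
        have h := congrArg (fun v => bV.repr v (Sum.inl (4*n + 1))) hbr
        simp only [map_zero, Finsupp.zero_apply] at h
        rw [hrep1 (3*n + 1), show 4*n + 1 - (3*n + 1) = n by ring] at h
        have hc : (2*(((3*n + 1 : ℤ)):ℂ) - ((4*n + 1 : ℤ):ℂ)) ≠ 0 := by
          intro hcc
          have h1 : ((2*n + 1 : ℤ) : ℂ) = 0 := by push_cast; push_cast at hcc; linear_combination hcc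
          have h2 : (2*n + 1 : ℤ) = 0 := by exact_mod_cast h1
          omega
        exact (mul_eq_zero.mp h).resolve_left hc
      have hQ : bV.repr (δ (L n) (L n)) (Sum.inr ()) = 0 := by
        have h := congrArg (fun v => bV.repr v (Sum.inr ())) (hdiagbr n)
        simp only [map_smul, Finsupp.smul_apply, smul_eq_mul] at h
        rw [hrep2 0] at h
        push_cast at h
        have hnC : (-(n:ℂ)) ≠ 0 := neg_ne_zero.mpr (Int.cast_ne_zero.mpr hn)
        have h2 : (-(n:ℂ)) * bV.repr (δ (L n) (L n)) (Sum.inr ()) = 0 := by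
          linear_combination -h
        exact (mul_eq_zero.mp h2).resolve_left hnC
      apply hzero
      · intro k
        by_cases hk : k = n
        · subst hk; exact hPn
        · exact hP k hk
      · exact hQ
  -- conclusion
  have hfin : ∀ i j : ℤ ⊕ Unit, δ (bV i) (bV j) = 0 := by
    rintro (m | ⟨⟩) (n | ⟨⟩)
    · rw [← hLdef, ← hLdef]
      by_cases h : m = n
      · subst h; exact hdiag m
      · exact hoff m n h
    · rw [← hLdef, ← hCdef]; exact hdLC m
    · rw [← hCdef, ← hLdef, hsym]; exact hdLC n
    · rw [← hCdef]; exact hdCC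
  have hδ : δ = 0 := by
    apply bV.ext
    intro i
    apply bV.ext
    intro j
    simp [hfin i j]
  intro x y
  rw [hδ]
  simp
end

section
/- Let b ∈ ℂ. If b = −1, then Cent_SVir(𝔉_b) = ℂε, i.e. a linear map γ : SVir → 𝔉_b satisfies γ([x,y]) = x · γ(y) for all x, y ∈ SVir if and only if γ is a scalar multiple of ε; if b ≠ −1, then Cent_SVir(𝔉_b) = {0}. -/
theorem centroid_SVir_density
(b : ℂ)
    (V : Type) [AddCommGroup V] [Module ℂ V]
    (bV : Module.Basis ((ℤ ⊕ Unit) ⊕ ℤ) ℂ V)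
    (br : V →ₗ[ℂ] V →ₗ[ℂ] V)
    (L : ℤ → V) (Cc : V) (G : ℤ → V)
    (hLdef : ∀ m : ℤ, L m = bV (Sum.inl (Sum.inl m)))
    (hCdef : Cc = bV (Sum.inl (Sum.inr ())))
    (hGdef : ∀ r : ℤ, G r = bV (Sum.inr r))
    (hLL : ∀ m n : ℤ, br (L m) (L n) = ((m : ℂ) - n) • L (m + n) +
      (if m + n = 0 then ((m : ℂ) ^ 3 - m) / 12 else 0) • Cc)
    (hLG : ∀ m r : ℤ, br (L m) (G r) = ((m : ℂ) / 2 - r) • G (m + r))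
    (hGG : ∀ r s : ℤ, br (G r) (G s) = (2 : ℂ) • L (r + s) +
      (if r + s = 0 then ((r : ℂ) ^ 2 - 1 / 4) / 3 else 0) • Cc)
    (hLC : ∀ m : ℤ, br (L m) Cc = 0)
    (hGC : ∀ r : ℤ, br (G r) Cc = 0)
    (hGL : ∀ r m : ℤ, br (G r) (L m) = (-((m : ℂ) / 2 - r)) • G (m + r))
    (hCx : ∀ x : V, br Cc x = 0)
    (M : Type) [AddCommGroup M] [Module ℂ M]
    (bM : Module.Basis (ℤ ⊕ ℤ) ℂ M)
    (Iv : ℤ → M) (Jv : ℤ → M)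
    (hIdef : ∀ n : ℤ, Iv n = bM (Sum.inl n))
    (hJdef : ∀ r : ℤ, Jv r = bM (Sum.inr r))
    (ρ : V →ₗ[ℂ] M →ₗ[ℂ] M)
    (hLI : ∀ m n : ℤ, ρ (L m) (Iv n) = (-((n : ℂ) + b * m)) • Iv (m + n))
    (hLJ : ∀ m r : ℤ, ρ (L m) (Jv r) = (-((r : ℂ) + (b + 1 / 2) * m)) • Jv (m + r))
    (hGI : ∀ r m : ℤ, ρ (G r) (Iv m) = (-((m : ℂ) / 2 + b * r)) • Jv (m + r))
    (hGJ : ∀ r s : ℤ, ρ (G r) (Jv s) = (2 : ℂ) • Iv (r + s))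
    (hCM : ∀ u : M, ρ Cc u = 0)
    (ε : V →ₗ[ℂ] M) (hεL : ∀ m : ℤ, ε (L m) = Iv m) (hεG : ∀ r : ℤ, ε (G r) = Jv r)
    (hεC : ε Cc = 0)
    (γ : V →ₗ[ℂ] M) :
    (b = -1 → ((∀ x y : V, γ (br x y) = ρ x (γ y)) ↔ ∃ lam : ℂ, ∀ x : V, γ x = lam • ε x)) ∧
    (b ≠ -1 → ((∀ x y : V, γ (br x y) = ρ x (γ y)) ↔ γ = 0)) := by
  -- generic coordinate lemma for diagonal operators
  have genrep : ∀ (T : M →ₗ[ℂ] M) (e : (ℤ ⊕ ℤ) → ℂ), (∀ j, T (bM j) = e j • bM j) →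
      ∀ (u : M) (i : ℤ ⊕ ℤ), bM.repr (T u) i = e i * bM.repr u i := by
    intro T e he u i
    have hmap : (bM.coord i).comp T = e i • bM.coord i := by
      apply bM.ext
      intro j
      rw [LinearMap.comp_apply, LinearMap.smul_apply, he j, Module.Basis.coord_apply,
        Module.Basis.coord_apply, map_smul, Finsupp.smul_apply, Module.Basis.repr_self, smul_eq_mul,
        smul_eq_mul, Finsupp.single_apply]
      by_cases h : j = i
      · rw [h]
      · rw [if_neg h, mul_zero, mul_zero]
    have h2 := LinearMap.congr_fun hmap u
    rw [LinearMap.comp_apply, LinearMap.smul_apply, Module.Basis.coord_apply, Module.Basis.coord_apply,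
      smul_eq_mul] at h2
    exact h2
  have rIl : ∀ n k : ℤ, bM.repr (Iv n) (Sum.inl k) = if n = k then 1 else 0 := by
    intro n k
    rw [hIdef, Module.Basis.repr_self, Finsupp.single_apply]
    simp
  have rIr : ∀ n k : ℤ, bM.repr (Iv n) (Sum.inr k) = 0 := by
    intro n k
    rw [hIdef, Module.Basis.repr_self, Finsupp.single_apply]
    simp
  have rJl : ∀ n k : ℤ, bM.repr (Jv n) (Sum.inl k) = 0 := by
    intro n k
    rw [hJdef, Module.Basis.repr_self, Finsupp.single_apply]
    simp
  have rJr : ∀ n k : ℤ, bM.repr (Jv n) (Sum.inr k) = if n = k then 1 else 0 := by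
    intro n k
    rw [hJdef, Module.Basis.repr_self, Finsupp.single_apply]
    simp
  have master : (∀ x y : V, γ (br x y) = ρ x (γ y)) →
      ∃ lam : ℂ, (∀ x : V, γ x = lam • ε x) ∧ (b ≠ -1 → lam = 0) := by
    intro hγ
    have ebase : ∀ j, ρ (L 0) (bM j)
        = (Sum.elim (fun k : ℤ => (-k : ℂ)) fun k : ℤ => (-k : ℂ)) j • bM j := by
      rintro (n | s)
      · rw [Sum.elim_inl, ← hIdef n, hLI, zero_add]
        norm_num
      · rw [Sum.elim_inr, ← hJdef s, hLJ, zero_add]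
        norm_num
    have eigrep := genrep (ρ (L 0)) _ ebase
    -- generic support lemma
    have suppgen : ∀ (w : M) (n : ℤ), ((-(n : ℂ)) • w = ρ (L 0) w) →
        ∀ i, i ≠ Sum.inl n → i ≠ Sum.inr n → bM.repr w i = 0 := by
      intro w n hw i h1 h2
      rcases i with k | k
      · have hk : k ≠ n := by intro h; exact h1 (by rw [h])
        have h4 := congrArg (fun u => bM.repr u (Sum.inl k)) hw
        simp only [map_smul, Finsupp.smul_apply, smul_eq_mul] at h4
        rw [eigrep w (Sum.inl k)] at h4
        simp only [Sum.elim_inl] at h4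
        by_contra hz
        have h5 := mul_right_cancel₀ hz h4
        have h6 : (n : ℂ) = (k : ℂ) := neg_inj.mp h5
        exact hk (by exact_mod_cast h6.symm)
      · have hk : k ≠ n := by intro h; exact h2 (by rw [h])
        have h4 := congrArg (fun u => bM.repr u (Sum.inr k)) hw
        simp only [map_smul, Finsupp.smul_apply, smul_eq_mul] at h4
        rw [eigrep w (Sum.inr k)] at h4
        simp only [Sum.elim_inr] at h4
        by_contra hz
        have h5 := mul_right_cancel₀ hz h4
        have h6 : (n : ℂ) = (k : ℂ) := neg_inj.mp h5
        exact hk (by exact_mod_cast h6.symm)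
    have hwL : ∀ n : ℤ, (-(n : ℂ)) • γ (L n) = ρ (L 0) (γ (L n)) := by
      intro n
      have e := hγ (L 0) (L n)
      rw [hLL, zero_add] at e
      norm_num at e
      rw [neg_smul]
      exact e
    have hwG : ∀ r : ℤ, (-(r : ℂ)) • γ (G r) = ρ (L 0) (γ (G r)) := by
      intro r
      have e := hγ (L 0) (G r)
      rw [hLG, zero_add] at e
      norm_num at e
      rw [neg_smul]
      exact e
    have hwC : (-((0:ℤ) : ℂ)) • γ Cc = ρ (L 0) (γ Cc) := by
      have e := hγ (L 0) Cc
      rw [hLC, map_zero] at e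
      norm_num
      exact e
    obtain ⟨A, Cs, keyL⟩ : ∃ A C : ℤ → ℂ, ∀ n, γ (L n) = A n • Iv n + C n • Jv n := by
      refine ⟨fun n => bM.repr (γ (L n)) (Sum.inl n), fun n => bM.repr (γ (L n)) (Sum.inr n),
        fun n => ?_⟩
      apply bM.repr.injective
      ext i
      rw [map_add, map_smul, map_smul, Finsupp.add_apply, Finsupp.smul_apply, Finsupp.smul_apply]
      rcases i with k | k
      · rw [rIl, rJl]
        by_cases h : n = k
        · subst h; simp
        · rw [if_neg h, suppgen (γ (L n)) n (hwL n) (Sum.inl k)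
            (by simp only [ne_eq, Sum.inl.injEq]; exact fun hh => h hh.symm) (by simp)]
          simp
      · rw [rIr, rJr]
        by_cases h : n = k
        · subst h; simp
        · rw [if_neg h, suppgen (γ (L n)) n (hwL n) (Sum.inr k) (by simp)
            (by simp only [ne_eq, Sum.inr.injEq]; exact fun hh => h hh.symm)]
          simp
    obtain ⟨P, Q, keyG⟩ : ∃ P Q : ℤ → ℂ, ∀ r, γ (G r) = P r • Iv r + Q r • Jv r := by
      refine ⟨fun r => bM.repr (γ (G r)) (Sum.inl r), fun r => bM.repr (γ (G r)) (Sum.inr r),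
        fun r => ?_⟩
      apply bM.repr.injective
      ext i
      rw [map_add, map_smul, map_smul, Finsupp.add_apply, Finsupp.smul_apply, Finsupp.smul_apply]
      rcases i with k | k
      · rw [rIl, rJl]
        by_cases h : r = k
        · subst h; simp
        · rw [if_neg h, suppgen (γ (G r)) r (hwG r) (Sum.inl k)
            (by simp only [ne_eq, Sum.inl.injEq]; exact fun hh => h hh.symm) (by simp)]
          simp
      · rw [rIr, rJr]
        by_cases h : r = k
        · subst h; simp
        · rw [if_neg h, suppgen (γ (G r)) r (hwG r) (Sum.inr k) (by simp)
            (by simp only [ne_eq, Sum.inr.injEq]; exact fun hh => h hh.symm)]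
          simp
    obtain ⟨U, Vv, keyC⟩ : ∃ u v : ℂ, γ Cc = u • Iv 0 + v • Jv 0 := by
      refine ⟨bM.repr (γ Cc) (Sum.inl 0), bM.repr (γ Cc) (Sum.inr 0), ?_⟩
      apply bM.repr.injective
      ext i
      rw [map_add, map_smul, map_smul, Finsupp.add_apply, Finsupp.smul_apply, Finsupp.smul_apply]
      rcases i with k | k
      · rw [rIl, rJl]
        by_cases h : (0:ℤ) = k
        · subst h; simp
        · rw [if_neg h, suppgen (γ Cc) 0 hwC (Sum.inl k)
            (by simp only [ne_eq, Sum.inl.injEq]; exact fun hh => h hh.symm) (by simp)]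
          simp
      · rw [rIr, rJr]
        by_cases h : (0:ℤ) = k
        · subst h; simp
        · rw [if_neg h, suppgen (γ Cc) 0 hwC (Sum.inr k) (by simp)
            (by simp only [ne_eq, Sum.inr.injEq]; exact fun hh => h hh.symm)]
          simp
    have extract : ∀ t : ℤ, ∀ x y : M, x = y →
        (bM.repr x (Sum.inl t) = bM.repr y (Sum.inl t) ∧
         bM.repr x (Sum.inr t) = bM.repr y (Sum.inr t)) := by
      intro t x y h
      rw [h]
      exact ⟨rfl, rfl⟩
    have SLL : ∀ m n : ℤ, m + n ≠ 0 →
        (((m:ℂ) - n) * A (m+n) = -((n:ℂ) + b*m) * A n ∧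
         ((m:ℂ) - n) * Cs (m+n) = -((n:ℂ) + (b+1/2)*m) * Cs n) := by
      intro m n h
      have e := hγ (L m) (L n)
      rw [hLL, if_neg h, zero_smul, add_zero, map_smul, keyL (m+n), keyL n, map_add, map_smul,
        map_smul, hLI, hLJ] at e
      obtain ⟨e1, e2⟩ := extract (m+n) _ _ e
      simp only [map_add, map_smul, Finsupp.add_apply, Finsupp.smul_apply, smul_eq_mul,
        rIl, rIr, rJl, rJr, mul_zero, mul_one, add_zero, zero_add,
        eq_self_iff_true, if_true] at e1 e2
      constructor
      · linear_combination e1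
      · linear_combination e2
    have SLLc : ∀ m : ℤ, 2*(m:ℂ)*A 0 + (((m:ℂ)^3 - (m:ℂ))/12) * U
        = ((m:ℂ) - b*(m:ℂ)) * A (-m) := by
      intro m
      have e := hγ (L m) (L (-m))
      rw [hLL, if_pos (show m + -m = 0 by omega), show m + -m = 0 from by omega,
        keyL (-m)] at e
      simp only [map_add, map_smul] at e
      rw [keyL 0, keyC, hLI, hLJ, show m + -m = 0 from by omega] at e
      obtain ⟨e1, -⟩ := extract 0 _ _ e
      simp only [map_add, map_smul, Finsupp.add_apply, Finsupp.smul_apply, smul_eq_mul,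
        rIl, rIr, rJl, rJr, mul_zero, mul_one, add_zero, zero_add,
        eq_self_iff_true, if_true] at e1
      push_cast at e1
      linear_combination e1
    have SLG : ∀ m r : ℤ, ((m:ℂ)/2 - r) * P (m+r) = -((r:ℂ) + b*m) * P r := by
      intro m r
      have e := hγ (L m) (G r)
      rw [hLG, map_smul, keyG (m+r), keyG r, map_add, map_smul, map_smul, hLI, hLJ] at e
      obtain ⟨e1, -⟩ := extract (m+r) _ _ e
      simp only [map_add, map_smul, Finsupp.add_apply, Finsupp.smul_apply, smul_eq_mul,
        rIl, rIr, rJl, rJr, mul_zero, mul_one, add_zero, zero_add,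
        eq_self_iff_true, if_true] at e1
      linear_combination e1
    have SGL : ∀ r m : ℤ, ((-((m:ℂ)/2 - r)) * P (m+r) = 2 * Cs m ∧
        (-((m:ℂ)/2 - r)) * Q (m+r) = -((m:ℂ)/2 + b*r) * A m) := by
      intro r m
      have e := hγ (G r) (L m)
      rw [hGL, map_smul, keyG (m+r), keyL m, map_add, map_smul, map_smul, hGI, hGJ,
        show r + m = m + r from by omega] at e
      obtain ⟨e1, e2⟩ := extract (m+r) _ _ e
      simp only [map_add, map_smul, Finsupp.add_apply, Finsupp.smul_apply, smul_eq_mul,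
        rIl, rIr, rJl, rJr, mul_zero, mul_one, add_zero, zero_add,
        eq_self_iff_true, if_true] at e1 e2
      exact ⟨by linear_combination e1, by linear_combination e2⟩
    have SGG : ∀ r s : ℤ, r + s ≠ 0 → 2 * A (r+s) = 2 * Q s := by
      intro r s h
      have e := hγ (G r) (G s)
      rw [hGG, if_neg h, zero_smul, add_zero, map_smul, keyL (r+s), keyG s, map_add, map_smul,
        map_smul, hGI, hGJ, show s + r = r + s from by omega] at e
      obtain ⟨e1, -⟩ := extract (r+s) _ _ e
      simp only [map_add, map_smul, Finsupp.add_apply, Finsupp.smul_apply, smul_eq_mul,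
        rIl, rIr, rJl, rJr, mul_zero, mul_one, add_zero, zero_add,
        eq_self_iff_true, if_true] at e1
      linear_combination e1
    have SGC : 2 * Vv = 0 ∧ b * U = 0 := by
      have e := hγ (G 1) Cc
      rw [hGC, map_zero, keyC, map_add, map_smul, map_smul, hGI, hGJ] at e
      norm_num at e
      obtain ⟨e1, e2⟩ := extract 1 _ _ e
      simp only [map_add, map_smul, Finsupp.add_apply, Finsupp.smul_apply, smul_eq_mul,
        rIl, rIr, rJl, rJr, mul_zero, mul_one, add_zero, zero_add,
        eq_self_iff_true, if_true, map_zero, Finsupp.coe_zero, Pi.zero_apply, map_neg,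
        Finsupp.neg_apply, neg_mul, mul_neg, neg_zero] at e1 e2
      exact ⟨by linear_combination -e1, by linear_combination e2⟩
    have hV : Vv = 0 := by linear_combination SGC.1 / 2
    have hbU : b * U = 0 := SGC.2
    have F2 : ∀ m r : ℤ, 2 * Cs m = ((r:ℂ) + b*m) * P r := by
      intro m r
      linear_combination (-1 : ℂ) * (SGL r m).1 - SLG m r
    have hCs1 : Cs 1 = -(b + 1/2) * Cs 0 := by
      have c := (SLL 1 0 (by omega)).2
      norm_num at c
      linear_combination c
    have hCs2 : Cs 2 = -(b + 1/2) * Cs 0 := by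
      have c := (SLL 2 0 (by omega)).2
      norm_num at c
      linear_combination c / 2
    have hbP : ∀ r : ℤ, b * P r = 0 := by
      intro r
      have h1 := F2 1 r
      have h2 := F2 2 r
      push_cast at h1 h2
      linear_combination h1 - h2 - 2 * hCs1 + 2 * hCs2
    have hCs : ∀ m : ℤ, Cs m = 0 := by
      intro m
      have h := F2 m 0
      push_cast at h
      linear_combination h / 2 + ((m:ℂ) / 2) * hbP 0
    have hPne : ∀ r : ℤ, r ≠ 0 → P r = 0 := by
      intro r hr
      by_cases hb0 : b = 0
      · have h := F2 0 r
        rw [hCs 0, hb0] at h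
        have hrc : (r:ℂ) ≠ 0 := Int.cast_ne_zero.mpr hr
        have h2 : (r:ℂ) * P r = 0 := by push_cast at h; linear_combination -h
        exact (mul_eq_zero.mp h2).resolve_left hrc
      · exact (mul_eq_zero.mp (hbP r)).resolve_left hb0
    have hP : ∀ r : ℤ, P r = 0 := by
      intro r
      by_cases hr : r = 0
      · subst hr
        by_cases hb0 : b = 0
        · have h := SLG 2 (-2)
          rw [show (2:ℤ) + -2 = 0 from by omega, hPne (-2) (by omega)] at h
          have h3 : (3:ℂ) * P 0 = 0 := by push_cast at h; linear_combination h
          exact (mul_eq_zero.mp h3).resolve_left (by norm_num)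
        · exact (mul_eq_zero.mp (hbP 0)).resolve_left hb0
      · exact hPne r hr
    have hQne : ∀ r : ℤ, r ≠ 0 → Q r = -b * A 0 := by
      intro r hr
      have h := (SGL r 0).2
      rw [show (0:ℤ) + r = r from by omega] at h
      have hrc : (r:ℂ) ≠ 0 := Int.cast_ne_zero.mpr hr
      have h2 : (r:ℂ) * Q r = (r:ℂ) * (-b * A 0) := by push_cast at h; linear_combination h
      exact mul_left_cancel₀ hrc h2
    have hAQ0 : ∀ n : ℤ, n ≠ 0 → A n = Q 0 := by
      intro n hn
      have h := SGG n 0 (by omega)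
      rw [show n + (0:ℤ) = n from by omega] at h
      linear_combination h / 2
    have hQ0 : Q 0 = -b * A 0 := by
      have h := SGG (-1) 2 (by omega)
      rw [show (-1:ℤ) + 2 = 1 from by omega] at h
      linear_combination -(hAQ0 1 (by omega)) + h / 2 + hQne 2 (by omega)
    have hQ : ∀ r : ℤ, Q r = -b * A 0 := by
      intro r
      by_cases hr : r = 0
      · rw [hr]; exact hQ0
      · exact hQne r hr
    have hAn : ∀ n : ℤ, n ≠ 0 → A n = -b * A 0 := by
      intro n hn
      rw [hAQ0 n hn, hQ0]
    have hbb : b * (1 + b) * A 0 = 0 := by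
      have h := (SLL 2 (-1) (by omega)).1
      rw [show (2:ℤ) + -1 = 1 from by omega, hAn 1 (by omega), hAn (-1) (by omega)] at h
      push_cast at h
      linear_combination (-1/2 : ℂ) * h
    have hA0 : b ≠ -1 → A 0 = 0 := by
      intro hbne
      by_cases hb0 : b = 0
      · have h := SLLc 1
        rw [hAn (-1) (by omega), hb0] at h
        push_cast at h
        linear_combination h / 2
      · rcases mul_eq_zero.mp hbb with h | h
        · rcases mul_eq_zero.mp h with h' | h'
          · exact absurd h' hb0
          · exact absurd (by linear_combination h') hbne
        · exact h
    have hU : U = 0 := by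
      by_cases hb0 : b = 0
      · have h := SLLc 2
        rw [hAn (-2) (by omega), hb0, hA0 (by rw [hb0]; norm_num)] at h
        push_cast at h
        linear_combination 2 * h
      · exact (mul_eq_zero.mp hbU).resolve_left hb0
    have hd : b = -1 ∨ A 0 = 0 := by
      by_cases hb1 : b = -1
      · exact Or.inl hb1
      · exact Or.inr (hA0 hb1)
    have HA : ∀ n : ℤ, A n = A 0 := by
      intro n
      by_cases hn : n = 0
      · rw [hn]
      · rw [hAn n hn]
        rcases hd with h | h
        · rw [h]; ring
        · rw [h]; ring
    have HQ : ∀ r : ℤ, Q r = A 0 := by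
      intro r
      rw [hQ r]
      rcases hd with h | h
      · rw [h]; ring
      · rw [h]; ring
    refine ⟨A 0, ?_, hA0⟩
    have hfin : γ = A 0 • ε := by
      apply bV.ext
      rintro ((m | um) | r)
      · rw [← hLdef m, LinearMap.smul_apply, keyL m, hεL, HA m, hCs m, zero_smul, add_zero]
      · cases um
        rw [← hCdef, LinearMap.smul_apply, keyC, hεC, hU, hV, smul_zero, zero_smul, zero_smul,
          add_zero]
      · rw [← hGdef r, LinearMap.smul_apply, keyG r, hεG, hP r, HQ r, zero_smul, zero_add]
    intro x
    rw [hfin]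
    rfl
  constructor
  · intro hb
    have hcent : ∀ x y : V, ε (br x y) = ρ x (ε y) := by
      have Hb : ∀ j k : (ℤ ⊕ Unit) ⊕ ℤ, ε (br (bV j) (bV k)) = ρ (bV j) (ε (bV k)) := by
        rintro ((m | um) | r) ((n | un) | s)
        · rw [← hLdef, ← hLdef, hLL, map_add, map_smul, map_smul, hεC, hεL, hεL, hLI,
            smul_zero, add_zero, hb]
          module
        · cases un
          rw [← hLdef, ← hCdef, hLC, map_zero, hεC, map_zero]
        · rw [← hLdef, ← hGdef, hLG, map_smul, hεG, hεG, hLJ, hb]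
          module
        · cases um; rw [← hCdef, hCx, map_zero, hCM]
        · cases um; rw [← hCdef, hCx, map_zero, hCM]
        · cases um; rw [← hCdef, hCx, map_zero, hCM]
        · rw [← hGdef, ← hLdef, hGL, map_smul, hεG, hεL, hGI, hb]
          module
        · cases un
          rw [← hGdef, ← hCdef, hGC, map_zero, hεC, map_zero]
        · rw [← hGdef, ← hGdef, hGG, map_add, map_smul, map_smul, hεL, hεC, smul_zero,
            add_zero, hεG, hGJ]
      intro x y
      have h1 : ∀ j, ε (br (bV j) y) = ρ (bV j) (ε y) := by
        intro j
        have hj : ε.comp (br (bV j)) = (ρ (bV j)).comp ε := bV.ext fun k => by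
          simpa using Hb j k
        simpa using LinearMap.congr_fun hj y
      have h2 : ε.comp (br.flip y) = ρ.flip (ε y) := bV.ext fun j => by
        simpa using h1 j
      simpa using LinearMap.congr_fun h2 x
    constructor
    · intro hγ
      obtain ⟨lam, h1, -⟩ := master hγ
      exact ⟨lam, h1⟩
    · rintro ⟨lam, hl⟩ x y
      rw [hl, hl, map_smul, hcent x y]
  · intro hb
    constructor
    · intro hγ
      obtain ⟨lam, h1, h2⟩ := master hγ
      apply LinearMap.ext
      intro x
      rw [h1 x, h2 hb, zero_smul]
      rfl
    · intro h0 x y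
      rw [h0]
      simp
end

section
/- Every symmetric super-biderivation φ of the super Virasoro algebra SVir (homogeneous of either ℤ/2-degree, with SVir acting on itself by the adjoint action) is trivial, i.e. φ(x, y) = 0 for all x, y ∈ SVir. -/
def SVdeg : (ℤ ⊕ Unit) ⊕ ℤ → ℤ
  | .inl (.inl m) => m
  | .inl (.inr _) => 0
  | .inr r => r

def SVpar : (ℤ ⊕ Unit) ⊕ ℤ → ZMod 2
  | .inl _ => 0
  | .inr _ => 1

@[simp] theorem SVdeg_L (m : ℤ) : SVdeg (Sum.inl (Sum.inl m)) = m := rfl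
@[simp] theorem SVdeg_C : SVdeg (Sum.inl (Sum.inr ())) = 0 := rfl
@[simp] theorem SVdeg_G (r : ℤ) : SVdeg (Sum.inr r) = r := rfl

theorem symmetric_superbiderivation_SVir_trivial
    (V : Type) [AddCommGroup V] [Module ℂ V]
    (bV : Module.Basis ((ℤ ⊕ Unit) ⊕ ℤ) ℂ V)
    (br : V →ₗ[ℂ] V →ₗ[ℂ] V)
    (L : ℤ → V) (Cc : V) (G : ℤ → V)
    (hLdef : ∀ m : ℤ, L m = bV (Sum.inl (Sum.inl m)))
    (hCdef : Cc = bV (Sum.inl (Sum.inr ())))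
    (hGdef : ∀ r : ℤ, G r = bV (Sum.inr r))
    (Vsub : ZMod 2 → Submodule ℂ V)
    (hV0 : Vsub 0 = Submodule.span ℂ (Set.range (fun i : ℤ ⊕ Unit => bV (Sum.inl i))))
    (hV1 : Vsub 1 = Submodule.span ℂ (Set.range (fun j : ℤ => bV (Sum.inr j))))
    (sgn : ZMod 2 → ℂ) (hsgn : ∀ p : ZMod 2, sgn p = if p = 1 then -1 else 1)
    (hLL : ∀ m n : ℤ, br (L m) (L n) = ((m : ℂ) - n) • L (m + n) +
      (if m + n = 0 then ((m : ℂ) ^ 3 - m) / 12 else 0) • Cc)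
    (hLG : ∀ m r : ℤ, br (L m) (G r) = ((m : ℂ) / 2 - r) • G (m + r))
    (hGG : ∀ r s : ℤ, br (G r) (G s) = (2 : ℂ) • L (r + s) +
      (if r + s = 0 then ((r : ℂ) ^ 2 - 1 / 4) / 3 else 0) • Cc)
    (hLC : ∀ m : ℤ, br (L m) Cc = 0)
    (hGC : ∀ r : ℤ, br (G r) Cc = 0)
    (hskew : ∀ p q : ZMod 2, ∀ x ∈ Vsub p, ∀ y ∈ Vsub q,
      br x y = (-(sgn (p * q))) • br y x)
    (φ : V →ₗ[ℂ] V →ₗ[ℂ] V) (d : ZMod 2)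
    (hhom : ∀ p q : ZMod 2, ∀ x ∈ Vsub p, ∀ y ∈ Vsub q, φ x y ∈ Vsub (p + q + d))
    (hbd1 : ∀ p q t : ZMod 2, ∀ x ∈ Vsub p, ∀ y ∈ Vsub q, ∀ z ∈ Vsub t,
      φ (br x y) z = sgn (d * p) • br x (φ y z) - sgn (q * (d + p)) • br y (φ x z))
    (hbd2 : ∀ p q t : ZMod 2, ∀ x ∈ Vsub p, ∀ y ∈ Vsub q, ∀ z ∈ Vsub t,
      φ x (br y z) = sgn ((d + p) * q) • br y (φ x z) - sgn (t * (d + p + q)) • br z (φ x y))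
    (hsym : ∀ p q : ZMod 2, ∀ x ∈ Vsub p, ∀ y ∈ Vsub q, φ x y = sgn (p * q) • φ y x) :
    ∀ x y : V, φ x y = 0 := by
  classical
  have hd2 : d = 0 ∨ d = 1 := (by decide : ∀ z : ZMod 2, z = 0 ∨ z = 1) d
  have hsgn0 : sgn 0 = 1 := by rw [hsgn]; norm_num
  have hsgn1 : sgn 1 = -1 := by rw [hsgn]; norm_num
  have hsgnadd1 : sgn (d + 1) = -sgn d := by
    rcases hd2 with rfl | rfl
    · rw [zero_add, hsgn1, hsgn0]
    · rw [(by decide : (1 : ZMod 2) + 1 = 0), hsgn0, hsgn1]; norm_num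
  have hhalf : ∀ u : V, u + u = 0 → u = 0 := by
    intro u hu
    have h2 : (2:ℂ) • u = 0 := by rw [two_smul]; exact hu
    rcases smul_eq_zero.mp h2 with h | h
    · exact absurd h two_ne_zero
    · exact h
  -- memberships
  have hLmem : ∀ m : ℤ, L m ∈ Vsub 0 := by
    intro m; rw [hV0, hLdef]
    exact Submodule.subset_span ⟨Sum.inl m, rfl⟩
  have hCmem : Cc ∈ Vsub 0 := by
    rw [hV0, hCdef]; exact Submodule.subset_span ⟨Sum.inr (), rfl⟩
  have hGmem : ∀ r : ℤ, G r ∈ Vsub 1 := by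
    intro r; rw [hV1, hGdef]
    exact Submodule.subset_span ⟨r, rfl⟩
  have hkmem : ∀ k, bV k ∈ Vsub (SVpar k) := by
    rintro ((m | u) | r)
    · simpa [SVpar, hLdef] using hLmem m
    · simpa [SVpar, hCdef] using hCmem
    · simpa [SVpar, hGdef] using hGmem r
  -- centrality of Cc
  have hbrRC : ∀ x : V, br x Cc = 0 := by
    intro x
    have hCC : br Cc Cc = 0 := by
      have h := hskew 0 0 Cc hCmem Cc hCmem
      rw [(by decide : (0:ZMod 2) * 0 = 0), hsgn0] at h
      apply hhalf
      nth_rewrite 1 [h]; module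
    have : br.flip Cc = 0 := by
      apply bV.ext
      rintro ((m | u) | r)
      · simpa [LinearMap.flip_apply, ← hLdef] using hLC m
      · simpa [LinearMap.flip_apply, ← hCdef] using hCC
      · simpa [LinearMap.flip_apply, ← hGdef] using hGC r
    simpa [LinearMap.flip_apply] using LinearMap.congr_fun this x
  have hbrCL : ∀ y : V, br Cc y = 0 := by
    have : br Cc = 0 := by
      apply bV.ext
      rintro ((m | u) | r)
      · rw [← hLdef]
        rw [hskew 0 0 Cc hCmem (L m) (hLmem m), hbrRC]; simp
      · rw [← hCdef, hbrRC Cc]; simp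
      · rw [← hGdef]
        rw [hskew 0 1 Cc hCmem (G r) (hGmem r), hbrRC]; simp
    intro y; rw [this]; simp
  -- basic bracket with L 0
  have hbrL0 : ∀ k, br (L 0) (bV k) = (-(SVdeg k : ℂ)) • bV k := by
    rintro ((m | u) | r)
    · rw [← hLdef, hLL]
      rcases eq_or_ne m 0 with rfl | hm
      · simp [SVdeg, hLdef]
      · rw [if_neg (by simpa using hm)]
        simp [SVdeg, hLdef]
    · rw [← hCdef, hLC]; simp [SVdeg]
    · rw [← hGdef, hLG]
      simp [SVdeg, hGdef]
  have hbrR0 : ∀ k, br (bV k) (L 0) = ((SVdeg k : ℂ)) • bV k := by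
    intro k
    rw [hskew (SVpar k) 0 (bV k) (hkmem k) (L 0) (hLmem 0), (by simp : SVpar k * 0 = 0),
      hsgn0, hbrL0]
    module
  -- coordinate machinery
  have hcoord : ∀ (c : ℂ) (k k' : (ℤ ⊕ Unit) ⊕ ℤ),
      bV.repr (c • bV k) k' = if k = k' then c else 0 := by
    intro c k k'
    rw [map_smul, Module.Basis.repr_self]
    simp [Finsupp.single_apply]
  have hreprL0 : ∀ (u : V) (k : (ℤ ⊕ Unit) ⊕ ℤ),
      bV.repr (br (L 0) u) k = (-(SVdeg k : ℂ)) * bV.repr u k := by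
    have key : ∀ k : (ℤ ⊕ Unit) ⊕ ℤ,
        (Finsupp.lapply k : ((ℤ ⊕ Unit) ⊕ ℤ →₀ ℂ) →ₗ[ℂ] ℂ).comp
            (bV.repr.toLinearMap.comp (br (L 0)))
          = (-(SVdeg k : ℂ)) • ((Finsupp.lapply k : ((ℤ ⊕ Unit) ⊕ ℤ →₀ ℂ) →ₗ[ℂ] ℂ).comp
            bV.repr.toLinearMap) := by
      intro k
      apply bV.ext
      intro j
      simp only [LinearMap.comp_apply, LinearMap.smul_apply, LinearEquiv.coe_toLinearMap,
        Finsupp.lapply_apply]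
      rw [hbrL0 j, hcoord, Module.Basis.repr_self]
      by_cases hjk : j = k
      · subst hjk; simp
      · simp [hjk, Finsupp.single_apply]
    intro u k
    simpa using LinearMap.congr_fun (key k) u
  have hEig : ∀ (n : ℤ) (u : V), br (L 0) u = (-(n : ℂ)) • u →
      ∀ k, SVdeg k ≠ n → bV.repr u k = 0 := by
    intro n u hu k hk
    have h1 : (-(SVdeg k : ℂ)) * bV.repr u k = (-(n : ℂ)) * bV.repr u k := by
      rw [← hreprL0 u k, hu, map_smul]; simp
    have h2 : ((n : ℂ) - (SVdeg k : ℂ)) * bV.repr u k = 0 := by linear_combination h1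
    rcases mul_eq_zero.mp h2 with h | h
    · exfalso
      apply hk
      have : (SVdeg k : ℂ) = (n : ℂ) := by linear_combination -h
      exact_mod_cast this
    · exact h
  have hPar0 : ∀ u ∈ Vsub 0, ∀ r : ℤ, bV.repr u (Sum.inr r) = 0 := by
    intro u hu r
    rw [hV0] at hu
    have hle : Submodule.span ℂ (Set.range (fun i : ℤ ⊕ Unit => bV (Sum.inl i))) ≤
        LinearMap.ker ((Finsupp.lapply (Sum.inr r) : ((ℤ ⊕ Unit) ⊕ ℤ →₀ ℂ) →ₗ[ℂ] ℂ).comp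
          bV.repr.toLinearMap) := by
      rw [Submodule.span_le]
      rintro _ ⟨i, rfl⟩
      simp [LinearMap.mem_ker, Module.Basis.repr_self, Finsupp.single_apply]
    simpa using hle hu
  have hPar1 : ∀ u ∈ Vsub 1, ∀ i : ℤ ⊕ Unit, bV.repr u (Sum.inl i) = 0 := by
    intro u hu i
    rw [hV1] at hu
    have hle : Submodule.span ℂ (Set.range (fun j : ℤ => bV (Sum.inr j))) ≤
        LinearMap.ker ((Finsupp.lapply (Sum.inl i) : ((ℤ ⊕ Unit) ⊕ ℤ →₀ ℂ) →ₗ[ℂ] ℂ).comp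
          bV.repr.toLinearMap) := by
      rw [Submodule.span_le]
      rintro _ ⟨j, rfl⟩
      simp [LinearMap.mem_ker, Module.Basis.repr_self, Finsupp.single_apply]
    simpa using hle hu
  have hRec : ∀ (u : V) (k₀ : (ℤ ⊕ Unit) ⊕ ℤ),
      (∀ k, k ≠ k₀ → bV.repr u k = 0) → u = bV.repr u k₀ • bV k₀ := by
    intro u k₀ h
    apply bV.repr.injective
    ext k
    by_cases hk : k = k₀
    · subst hk; rw [hcoord]; simp
    · rw [h k hk, hcoord, if_neg (Ne.symm hk)]
  have hShapeL : ∀ (n : ℤ) (u : V), br (L 0) u = (-(n : ℂ)) • u → u ∈ Vsub 0 → n ≠ 0 →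
      u = bV.repr u (Sum.inl (Sum.inl n)) • L n := by
    intro n u heig hu hn
    rw [hLdef]
    apply hRec
    rintro ((m | un) | r) hk
    · refine hEig n u heig _ ?_
      simp only [SVdeg]
      exact fun h => hk (by rw [h])
    · refine hEig n u heig _ ?_
      simpa [SVdeg] using Ne.symm hn
    · exact hPar0 u hu r
  have hShapeG : ∀ (r : ℤ) (u : V), br (L 0) u = (-(r : ℂ)) • u → u ∈ Vsub 1 →
      u = bV.repr u (Sum.inr r) • G r := by
    intro r u heig hu
    rw [hGdef]
    apply hRec
    rintro ((m | un) | r') hk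
    · exact hPar1 u hu _
    · exact hPar1 u hu _
    · refine hEig r u heig _ ?_
      simp only [SVdeg]
      exact fun h => hk (by rw [h])
  have hCent : ∀ u : V, br (L 0) u = 0 → br (L 1) u = 0 → ∃ c : ℂ, u = c • Cc := by
    intro u h0 h1
    have heig : br (L 0) u = (-((0:ℤ) : ℂ)) • u := by rw [h0]; simp
    have hz := hEig 0 u heig
    have hu : u = bV.repr u (Sum.inl (Sum.inl 0)) • L 0 + bV.repr u (Sum.inl (Sum.inr ())) • Cc
        + bV.repr u (Sum.inr 0) • G 0 := by
      apply bV.repr.injective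
      ext k
      rw [map_add, map_add, Finsupp.add_apply, Finsupp.add_apply, hLdef, hCdef, hGdef,
        hcoord, hcoord, hcoord]
      rcases k with ((m | un) | r)
      · by_cases hm : m = 0
        · subst hm; simp
        · rw [hz _ (by simpa [SVdeg] using hm)]
          simp [Ne.symm hm]
      · rcases un; simp
      · by_cases hr : r = 0
        · subst hr; simp
        · rw [hz _ (by simpa [SVdeg] using hr)]
          simp [Ne.symm hr]
    have hb : (0:V) = bV.repr u (Sum.inl (Sum.inl 0)) • br (L 1) (L 0)
        + bV.repr u (Sum.inl (Sum.inr ())) • br (L 1) Cc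
        + bV.repr u (Sum.inr 0) • br (L 1) (G 0) := by
      rw [← h1]
      nth_rewrite 1 [hu]
      simp
    rw [hLL 1 0, hLC, hLG] at hb
    norm_num at hb
    -- hb : 0 = a • (1 • L 1 + 0 • Cc) + g • ((1/2) • G 1)  (roughly)
    have ha : bV.repr u (Sum.inl (Sum.inl 0)) = 0 := by
      have := congrArg (fun w => bV.repr w (Sum.inl (Sum.inl 1))) hb
      have h' := (by simpa [map_add, map_smul, hLdef, hGdef, hCdef, Module.Basis.repr_self,
        Finsupp.single_apply, hcoord] using this : 0 = bV.repr u (Sum.inl (Sum.inl 0)))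
      exact h'.symm
    have hg : bV.repr u (Sum.inr 0) = 0 := by
      have := congrArg (fun w => bV.repr w (Sum.inr 1)) hb
      have h' := (by simpa [map_add, map_smul, hLdef, hGdef, hCdef, Module.Basis.repr_self,
        Finsupp.single_apply, hcoord] using this : (0:ℂ) = (bV.repr u) (Sum.inr 0) * (1/2))
      have : (bV.repr u) (Sum.inr 0) = 0 := by linear_combination 2 * h'.symm
      exact this
    refine ⟨bV.repr u (Sum.inl (Sum.inr ())), ?_⟩
    nth_rewrite 1 [hu]
    rw [ha, hg]
    simp
  -- Step 1 : the Cc column vanishes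
  have s1a : ∀ (p : ZMod 2), ∀ x ∈ Vsub p, ∀ m : ℤ, br (L m) (φ x Cc) = 0 := by
    intro p x hx m
    have e := hbd2 p 0 0 x hx (L m) (hLmem m) Cc hCmem
    rw [hLC, mul_zero, zero_mul, hsgn0, hbrCL] at e
    simpa using e.symm
  have s1b : ∀ (p : ZMod 2), ∀ x ∈ Vsub p, ∃ c : ℂ, φ x Cc = c • Cc := fun p x hx =>
    hCent _ (s1a p x hx 0) (s1a p x hx 1)
  have s1c : ∀ (p q : ZMod 2), ∀ x ∈ Vsub p, ∀ y ∈ Vsub q, φ (br x y) Cc = 0 := by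
    intro p q x hx y hy
    obtain ⟨c1, hc1⟩ := s1b q y hy
    obtain ⟨c2, hc2⟩ := s1b p x hx
    have e := hbd1 p q 0 x hx y hy Cc hCmem
    rw [hc1, hc2, map_smul, map_smul, hbrRC, hbrRC] at e
    simpa using e
  have hφGC : ∀ a : ℤ, φ (G a) Cc = 0 := by
    intro a
    obtain ⟨m, hm⟩ : ∃ m : ℤ, 3*m - 2*a ≠ 0 := by
      rcases eq_or_ne (3*(a+1)) (2*a) with h | h
      · exact ⟨a - 1, by omega⟩
      · exact ⟨a + 1, by omega⟩
    have e := s1c 0 1 (L m) (hLmem m) (G (a - m)) (hGmem _)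
    rw [hLG, show m + (a - m) = a by ring, map_smul, LinearMap.smul_apply] at e
    push_cast at e
    have hc : ((m:ℂ)/2 - ((a:ℂ) - (m:ℂ))) ≠ 0 := by
      intro h
      apply hm
      have h2 : ((3*m - 2*a : ℤ) : ℂ) = 0 := by push_cast; linear_combination 2*h
      exact_mod_cast h2
    rcases smul_eq_zero.mp e with h | h
    · exact absurd h hc
    · exact h
  have hφCC : φ Cc Cc = 0 := by
    have hCceq : Cc = (3:ℂ) • br (G 1) (G (-1)) - (3:ℂ) • br (G 0) (G 0) := by
      rw [hGG, hGG]
      norm_num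
      module
    have e1 := s1c 1 1 (G 1) (hGmem 1) (G (-1)) (hGmem (-1))
    have e2 := s1c 1 1 (G 0) (hGmem 0) (G 0) (hGmem 0)
    calc φ Cc Cc = φ ((3:ℂ) • br (G 1) (G (-1)) - (3:ℂ) • br (G 0) (G 0)) Cc := by
          rw [← hCceq]
      _ = 0 := by
          rw [map_sub, LinearMap.sub_apply, map_smul, map_smul, LinearMap.smul_apply,
            LinearMap.smul_apply, e1, e2]
          simp
  have hφL0C : φ (L 0) Cc = 0 := by
    have h2 : br (G 1) (G (-1)) = (2:ℂ) • L 0 + (1/4:ℂ) • Cc := by rw [hGG]; norm_num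
    have e1 := s1c 1 1 (G 1) (hGmem 1) (G (-1)) (hGmem (-1))
    rw [h2, map_add, LinearMap.add_apply, map_smul, LinearMap.smul_apply, map_smul,
      LinearMap.smul_apply, hφCC] at e1
    have h3 : (2:ℂ) • (φ (L 0)) Cc = 0 := by simpa using e1
    rcases smul_eq_zero.mp h3 with h | h
    · exact absurd h two_ne_zero
    · exact h
  have hφLC : ∀ a : ℤ, φ (L a) Cc = 0 := by
    intro a
    rcases eq_or_ne a 0 with rfl | ha
    · exact hφL0C
    · have h2 : br (G 0) (G a) = (2:ℂ) • L a := by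
        rw [hGG, if_neg (by omega : ¬ (0 + a = 0)), zero_add]
        simp
      have e1 := s1c 1 1 (G 0) (hGmem 0) (G a) (hGmem a)
      rw [h2, map_smul, LinearMap.smul_apply] at e1
      rcases smul_eq_zero.mp e1 with h | h
      · exact absurd h two_ne_zero
      · exact h
  have hφxC : ∀ x : V, φ x Cc = 0 := by
    have hfl : φ.flip Cc = 0 := by
      apply bV.ext
      rintro ((m | un) | r)
      · simpa [LinearMap.flip_apply, ← hLdef] using hφLC m
      · simpa [LinearMap.flip_apply, ← hCdef] using hφCC
      · simpa [LinearMap.flip_apply, ← hGdef] using hφGC r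
    intro x
    simpa [LinearMap.flip_apply] using LinearMap.congr_fun hfl x
  have hφCx : ∀ (q : ZMod 2), ∀ y ∈ Vsub q, φ Cc y = 0 := by
    intro q y hy
    rw [hsym 0 q Cc hCmem y hy, zero_mul, hsgn0, one_smul, hφxC]
  -- Step 2
  have hG00 : φ (G 0) (G 0) = 0 := by
    have h := hsym 1 1 (G 0) (hGmem 0) (G 0) (hGmem 0)
    rw [mul_one, hsgn1] at h
    apply hhalf
    nth_rewrite 1 [h]; module
  -- Step 3 and 4
  have hstar : ∀ (t : ZMod 2), ∀ z ∈ Vsub t,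
      (2:ℂ) • φ (L 0) z = (sgn d + sgn d) • br (G 0) (φ (G 0) z) := by
    intro t z hz
    have e := hbd1 1 1 t (G 0) (hGmem 0) (G 0) (hGmem 0) z hz
    rw [mul_one, one_mul, hsgnadd1] at e
    have hbr : br (G 0) (G 0) = (2:ℂ) • L 0 + (-(1/12) : ℂ) • Cc := by
      rw [hGG]; norm_num
    rw [hbr, map_add, LinearMap.add_apply, map_smul, LinearMap.smul_apply, map_smul,
      LinearMap.smul_apply, hφCx t z hz] at e
    have e' : (2:ℂ) • φ (L 0) z
        = sgn d • br (G 0) (φ (G 0) z) - -sgn d • br (G 0) (φ (G 0) z) := by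
      simpa using e
    rw [e']
    module
  have hL0G0 : φ (L 0) (G 0) = 0 := by
    have h := hstar 1 (G 0) (hGmem 0)
    rw [hG00, map_zero, smul_zero] at h
    rcases smul_eq_zero.mp h with h' | h'
    · exact absurd h' two_ne_zero
    · exact h'
  have hG0L0 : φ (G 0) (L 0) = 0 := by
    rw [hsym 1 0 (G 0) (hGmem 0) (L 0) (hLmem 0), mul_zero, hsgn0, one_smul, hL0G0]
  have hL0L0 : φ (L 0) (L 0) = 0 := by
    have h := hstar 0 (L 0) (hLmem 0)
    rw [hG0L0, map_zero, smul_zero] at h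
    rcases smul_eq_zero.mp h with h' | h'
    · exact absurd h' two_ne_zero
    · exact h'
  -- more bracket helpers
  have hGL0 : ∀ r : ℤ, br (G r) (L 0) = (r:ℂ) • G r := by
    intro r
    rw [hskew 1 0 (G r) (hGmem r) (L 0) (hLmem 0), mul_zero, hsgn0, hLG, zero_add]
    module
  have hLn0 : ∀ n : ℤ, br (L n) (L 0)
      = (n:ℂ) • L n + (if n = 0 then ((n:ℂ)^3 - n)/12 else 0) • Cc := by
    intro n
    rw [hLL n 0]
    simp only [Int.cast_zero, sub_zero, add_zero]
  -- Step 5 : eigen properties of the L0 row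
  have hveig : ∀ n : ℤ, br (L 0) (φ (L 0) (L n)) = (-(n:ℂ)) • φ (L 0) (L n) := by
    intro n
    have e := hbd2 0 0 0 (L 0) (hLmem 0) (L n) (hLmem n) (L 0) (hLmem 0)
    rw [hL0L0, map_zero, smul_zero, hLn0 n, map_add, map_smul, map_smul, hφL0C,
      smul_zero, add_zero] at e
    simp only [mul_zero, zero_mul, hsgn0, one_smul, zero_sub] at e
    linear_combination (norm := module) e
  have hweig : ∀ r : ℤ, br (L 0) (φ (L 0) (G r)) = (-(r:ℂ)) • φ (L 0) (G r) := by
    intro r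
    have e := hbd2 0 1 0 (L 0) (hLmem 0) (G r) (hGmem r) (L 0) (hLmem 0)
    rw [hL0L0, map_zero, smul_zero, hGL0, map_smul] at e
    simp only [zero_mul, hsgn0, one_smul, zero_sub] at e
    linear_combination (norm := module) e
  have hvmem : ∀ n : ℤ, φ (L 0) (L n) ∈ Vsub d := by
    intro n
    have := hhom 0 0 (L 0) (hLmem 0) (L n) (hLmem n)
    simpa using this
  have hwmem : ∀ r : ℤ, φ (L 0) (G r) ∈ Vsub (1 + d) := by
    intro r
    have := hhom 0 1 (L 0) (hLmem 0) (G r) (hGmem r)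
    simpa using this
  -- the (GG) identity for the L0 row
  have hGGid : ∀ r s : ℤ, (2:ℂ) • φ (L 0) (L (r+s)) =
      sgn d • br (G r) (φ (L 0) (G s)) + sgn d • br (G s) (φ (L 0) (G r)) := by
    intro r s
    have e := hbd2 0 1 1 (L 0) (hLmem 0) (G r) (hGmem r) (G s) (hGmem s)
    simp only [add_zero, mul_one, one_mul, hsgnadd1] at e
    rw [hGG r s, map_add, map_smul, map_smul, hφL0C, smul_zero, add_zero] at e
    linear_combination (norm := module) e
  -- final machinery : once the L0 row vanishes, everything vanishes
  have hmain : (∀ n : ℤ, φ (L 0) (L n) = 0) → (∀ r : ℤ, φ (L 0) (G r) = 0) →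
      ∀ x y : V, φ x y = 0 := by
    intro hvL hvG
    have hrow : ∀ y : V, φ (L 0) y = 0 := by
      have h0 : φ (L 0) = 0 := by
        apply bV.ext
        rintro ((m | un) | r)
        · simpa [← hLdef] using hvL m
        · simpa [← hCdef] using hφL0C
        · simpa [← hGdef] using hvG r
      intro y; rw [h0]; simp
    have hcolk : ∀ k, φ (bV k) (L 0) = 0 := by
      intro k
      rw [hsym (SVpar k) 0 (bV k) (hkmem k) (L 0) (hLmem 0), mul_zero, hsgn0, one_smul, hrow]
    have hdiff : ∀ k₁ k₂, SVdeg k₁ ≠ SVdeg k₂ → φ (bV k₁) (bV k₂) = 0 := by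
      intro k₁ k₂ hne
      have e1 := hbd1 0 (SVpar k₁) (SVpar k₂) (L 0) (hLmem 0) (bV k₁) (hkmem k₁)
        (bV k₂) (hkmem k₂)
      rw [hbrL0 k₁, hrow, map_zero, smul_zero, sub_zero, mul_zero, hsgn0, one_smul,
        map_smul, LinearMap.smul_apply] at e1
      have e2 := hbd2 (SVpar k₁) (SVpar k₂) 0 (bV k₁) (hkmem k₁) (bV k₂) (hkmem k₂)
        (L 0) (hLmem 0)
      rw [hbrR0 k₂, hcolk, map_zero, smul_zero, zero_sub, zero_mul, hsgn0, one_smul,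
        map_smul] at e2
      have e3 : ((SVdeg k₂ : ℂ) - (SVdeg k₁ : ℂ)) • φ (bV k₁) (bV k₂) = 0 := by
        linear_combination (norm := module) e2 + e1
      rcases smul_eq_zero.mp e3 with h | h
      · exfalso
        apply hne
        have h2 : ((SVdeg k₁ : ℤ):ℂ) = ((SVdeg k₂ : ℤ):ℂ) := by linear_combination -h
        exact_mod_cast h2
      · exact h
    have hsameL : ∀ (k₁ : (ℤ ⊕ Unit) ⊕ ℤ) (a : ℤ), SVdeg k₁ = a → φ (bV k₁) (L a) = 0 := by
      intro k₁ a hdeg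
      obtain ⟨m, hm0, hma, hm2⟩ : ∃ m : ℤ, m ≠ 0 ∧ m ≠ a ∧ 2*m - a ≠ 0 := by
        rcases eq_or_ne a (-1) with rfl | h1
        · exact ⟨-2, by norm_num, by norm_num, by norm_num⟩
        · rcases eq_or_ne a (-2) with rfl | h2
          · exact ⟨-3, by norm_num, by norm_num, by norm_num⟩
          · exact ⟨a + 1, by omega, by omega, by omega⟩
      have hz1 : φ (bV k₁) (L (a - m)) = 0 := by
        rw [hLdef (a - m)]
        exact hdiff k₁ _ (by rw [hdeg, SVdeg_L]; omega)
      have hz2 : φ (bV k₁) (L m) = 0 := by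
        rw [hLdef m]
        exact hdiff k₁ _ (by rw [hdeg, SVdeg_L]; omega)
      have e := hbd2 (SVpar k₁) 0 0 (bV k₁) (hkmem k₁) (L m) (hLmem m) (L (a - m)) (hLmem _)
      rw [hLL m (a - m), show m + (a - m) = a by ring] at e
      rw [map_add, map_smul, map_smul, hφxC] at e
      rw [hz1, hz2] at e
      simp only [map_zero, smul_zero, add_zero, sub_zero] at e
      push_cast at e
      have e' : (((m:ℂ) - ((a:ℂ) - (m:ℂ)))) • φ (bV k₁) (L a) = 0 := by
        linear_combination (norm := module) e
      rcases smul_eq_zero.mp e' with h | h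
      · exfalso
        apply hm2
        have h2 : ((2*m - a : ℤ):ℂ) = 0 := by push_cast; linear_combination h
        exact_mod_cast h2
      · exact h
    have hsameG : ∀ (k₁ : (ℤ ⊕ Unit) ⊕ ℤ) (a : ℤ), SVdeg k₁ = a → φ (bV k₁) (G a) = 0 := by
      intro k₁ a hdeg
      obtain ⟨m, hm0, hma, hm2⟩ : ∃ m : ℤ, m ≠ 0 ∧ m ≠ a ∧ 3*m - 2*a ≠ 0 := by
        rcases eq_or_ne a (-1) with rfl | h1
        · exact ⟨-2, by norm_num, by norm_num, by norm_num⟩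
        · rcases eq_or_ne a (-3) with rfl | h2
          · exact ⟨-4, by norm_num, by norm_num, by norm_num⟩
          · exact ⟨a + 1, by omega, by omega, by omega⟩
      have hz1 : φ (bV k₁) (G (a - m)) = 0 := by
        rw [hGdef (a - m)]
        exact hdiff k₁ _ (by rw [hdeg, SVdeg_G]; omega)
      have hz2 : φ (bV k₁) (L m) = 0 := by
        rw [hLdef m]
        exact hdiff k₁ _ (by rw [hdeg, SVdeg_L]; omega)
      have e := hbd2 (SVpar k₁) 0 1 (bV k₁) (hkmem k₁) (L m) (hLmem m) (G (a - m)) (hGmem _)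
      rw [hLG m (a - m), show m + (a - m) = a by ring, map_smul] at e
      rw [hz1, hz2] at e
      simp only [map_zero, smul_zero, sub_zero] at e
      push_cast at e
      have e' : ((m:ℂ)/2 - ((a:ℂ) - (m:ℂ))) • φ (bV k₁) (G a) = 0 := by
        linear_combination (norm := module) e
      rcases smul_eq_zero.mp e' with h | h
      · exfalso
        apply hm2
        have h2 : ((3*m - 2*a : ℤ):ℂ) = 0 := by push_cast; linear_combination 2*h
        exact_mod_cast h2
      · exact h
    have hall : ∀ k₁ k₂, φ (bV k₁) (bV k₂) = 0 := by
      intro k₁ k₂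
      rcases eq_or_ne (SVdeg k₁) (SVdeg k₂) with he | hne
      · rcases k₂ with ((n | un) | r)
        · rw [← hLdef]; exact hsameL k₁ n he
        · rw [← hCdef]; exact hφxC _
        · rw [← hGdef]; exact hsameG k₁ r he
      · exact hdiff k₁ k₂ hne
    have hzero : φ = 0 := by
      apply bV.ext; intro k₁; apply bV.ext; intro k₂
      simpa using hall k₁ k₂
    intro x y; rw [hzero]; simp
  have hLne : ∀ n : ℤ, L n ≠ 0 := fun n => by rw [hLdef]; exact bV.ne_zero _
  have hGne : ∀ r : ℤ, G r ≠ 0 := fun r => by rw [hGdef]; exact bV.ne_zero _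
  -- now split on the parity of φ
  rcases hd2 with hd | hd
  · -- case d = 0
    subst hd
    obtain ⟨xs, hvform⟩ : ∃ xs : ℤ → ℂ, ∀ n, φ (L 0) (L n) = xs n • L n := by
      refine ⟨fun n => bV.repr (φ (L 0) (L n)) (Sum.inl (Sum.inl n)), fun n => ?_⟩
      rcases eq_or_ne n 0 with rfl | hn
      · simp [hL0L0]
      · exact hShapeL n _ (hveig n) (hvmem n) hn
    obtain ⟨gs, hwform⟩ : ∃ gs : ℤ → ℂ, ∀ r, φ (L 0) (G r) = gs r • G r := by
      refine ⟨fun r => bV.repr (φ (L 0) (G r)) (Sum.inr r), fun r => ?_⟩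
      exact hShapeG r _ (hweig r) (by simpa using hwmem r)
    have hxs0 : xs 0 = 0 := by
      have h := (hvform 0).symm
      rw [hL0L0] at h
      rcases smul_eq_zero.mp h with h' | h'
      · exact h'
      · exact absurd h' (hLne 0)
    have hg0 : gs 0 = 0 := by
      have h := (hwform 0).symm
      rw [hL0G0] at h
      rcases smul_eq_zero.mp h with h' | h'
      · exact h'
      · exact absurd h' (hGne 0)
    have hadd : ∀ r s : ℤ, xs (r + s) = gs r + gs s := by
      intro r s
      have e := hGGid r s
      rw [hsgn0, one_smul, one_smul, hvform, hwform, hwform, map_smul, map_smul,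
        hGG r s, hGG s r, show s + r = r + s from add_comm s r] at e
      have e3 : (2 * xs (r+s)) • L (r+s)
          = (2 * (gs s + gs r)) • L (r+s)
            + ((gs s * (if r + s = 0 then ((r:ℂ)^2 - 1/4)/3 else 0))
               + (gs r * (if r + s = 0 then ((s:ℂ)^2 - 1/4)/3 else 0))) • Cc := by
        linear_combination (norm := module) e
      have e4 := congrArg (fun u => bV.repr u (Sum.inl (Sum.inl (r + s)))) e3
      simp only [hLdef, hCdef, map_add, Finsupp.add_apply, hcoord] at e4
      norm_num at e4
      simp only [reduceCtorEq, if_false] at e4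
      linear_combination e4 / 2
    have hgx : ∀ r : ℤ, gs r = xs r := by
      intro r
      have h := hadd r 0
      rw [add_zero, hg0, add_zero] at h
      exact h.symm
    have haddx : ∀ r s : ℤ, xs (r + s) = xs r + xs s := by
      intro r s
      rw [hadd, hgx, hgx]
    have hm1 : xs (-1) = -xs 1 := by
      have h := haddx 1 (-1)
      rw [show (1:ℤ) + -1 = 0 from by norm_num, hxs0] at h
      linear_combination -h
    have hlin : ∀ n : ℤ, xs n = n * xs 1 := by
      intro n
      induction n using Int.induction_on with
      | zero => simpa using hxs0
      | succ k ih =>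
          have h := haddx k 1
          rw [h, ih]
          push_cast
          ring
      | pred k ih =>
          have h := haddx (-k) (-1)
          rw [show (-(k:ℤ)) + (-1) = -(k:ℤ) - 1 by ring] at h
          rw [h, ih, hm1]
          push_cast
          ring
    -- the key formula for φ (L m) (L n)
    have hPhi : ∀ m n : ℤ, ((n:ℂ) - m) • φ (L m) (L n)
        = br (L n) (φ (L 0) (L m)) - br (L m) (φ (L 0) (L n)) := by
      intro m n
      have e1 := hbd1 0 0 0 (L 0) (hLmem 0) (L m) (hLmem m) (L n) (hLmem n)
      simp only [mul_zero, zero_mul, hsgn0, one_smul, add_zero] at e1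
      rw [hLL 0 m, zero_add] at e1
      rw [map_add, LinearMap.add_apply, map_smul, LinearMap.smul_apply, map_smul,
        LinearMap.smul_apply, hφCx 0 (L n) (hLmem n), smul_zero, add_zero] at e1
      have e2 := hbd2 0 0 0 (L m) (hLmem m) (L n) (hLmem n) (L 0) (hLmem 0)
      simp only [mul_zero, zero_mul, hsgn0, one_smul, add_zero] at e2
      rw [hLn0 n, map_add, map_smul, map_smul, hφxC, smul_zero, add_zero] at e2
      rw [hsym 0 0 (L m) (hLmem m) (L 0) (hLmem 0), zero_mul, hsgn0, one_smul] at e2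
      linear_combination (norm := module) e1 + e2
    have hPhiVal : ∀ m n : ℤ, ((n:ℂ) - m) • φ (L m) (L n)
        = (((n:ℂ) - m) * ((m:ℂ) + n) * xs 1) • L (m + n) := by
      intro m n
      have e := hPhi m n
      rw [hvform m, hvform n, map_smul, map_smul, hLL n m, hLL m n,
        show n + m = m + n from add_comm n m, hlin m, hlin n] at e
      rcases eq_or_ne (m + n) 0 with h0 | h0
      · simp only [if_pos h0] at e
        have hn : n = -m := by omega
        subst hn
        rw [e]
        module
      · simp only [if_neg h0, zero_smul, add_zero] at e
        rw [e]
        module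
    have ht0 : xs 1 = 0 := by
      have h34 : φ (L 3) (L 4) = (7 * xs 1) • L 7 := by
        have e := hPhiVal 3 4
        push_cast at e
        norm_num at e
        linear_combination (norm := module) e
      have h24 : φ (L 2) (L 4) = (6 * xs 1) • L 6 := by
        have e := hPhiVal 2 4
        push_cast at e
        norm_num at e
        linear_combination (norm := module) ((2:ℂ))⁻¹ • e
      have h14 : φ (L 1) (L 4) = (5 * xs 1) • L 5 := by
        have e := hPhiVal 1 4
        push_cast at e
        norm_num at e
        linear_combination (norm := module) ((3:ℂ))⁻¹ • e
      have hb12 : br (L 1) (L 2) = (-1:ℂ) • L 3 := by rw [hLL]; norm_num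
      have hb16 : br (L 1) (L 6) = (-5:ℂ) • L 7 := by rw [hLL]; norm_num
      have hb25 : br (L 2) (L 5) = (-3:ℂ) • L 7 := by rw [hLL]; norm_num
      have e := hbd1 0 0 0 (L 1) (hLmem 1) (L 2) (hLmem 2) (L 4) (hLmem 4)
      simp only [mul_zero, zero_mul, hsgn0, one_smul, add_zero] at e
      rw [hb12, map_smul, LinearMap.smul_apply, h34, h24, h14, map_smul, map_smul,
        hb16, hb25] at e
      have e8 : (8 * xs 1) • L 7 = 0 := by
        linear_combination (norm := module) e
      rcases smul_eq_zero.mp e8 with h | h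
      · linear_combination h / 8
      · exact absurd h (hLne 7)
    refine hmain (fun n => ?_) (fun r => ?_)
    · rw [hvform n, hlin n, ht0, mul_zero, zero_smul]
    · rw [hwform r, hgx r, hlin r, ht0, mul_zero, zero_smul]
  · -- case d = 1
    subst hd
    obtain ⟨ys, hvform⟩ : ∃ ys : ℤ → ℂ, ∀ n, φ (L 0) (L n) = ys n • G n := by
      refine ⟨fun n => bV.repr (φ (L 0) (L n)) (Sum.inr n), fun n => ?_⟩
      exact hShapeG n _ (hveig n) (hvmem n)
    obtain ⟨as, hwform⟩ : ∃ as : ℤ → ℂ, ∀ r, φ (L 0) (G r) = as r • L r := by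
      refine ⟨fun r => bV.repr (φ (L 0) (G r)) (Sum.inl (Sum.inl r)), fun r => ?_⟩
      rcases eq_or_ne r 0 with rfl | hr
      · simp [hL0G0]
      · refine hShapeL r _ (hweig r) ?_ hr
        have h := hwmem r
        rw [show (1 : ZMod 2) + 1 = 0 from by decide] at h
        exact h
    have hy0 : ys 0 = 0 := by
      have h := (hvform 0).symm
      rw [hL0L0] at h
      rcases smul_eq_zero.mp h with h' | h'
      · exact h'
      · exact absurd h' (hGne 0)
    have ha0 : as 0 = 0 := by
      have h := (hwform 0).symm
      rw [hL0G0] at h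
      rcases smul_eq_zero.mp h with h' | h'
      · exact h'
      · exact absurd h' (hLne 0)
    have hGL : ∀ r s : ℤ, br (G r) (L s) = (-((s:ℂ)/2 - r)) • G (s + r) := by
      intro r s
      rw [hskew 1 0 (G r) (hGmem r) (L s) (hLmem s), mul_zero, hsgn0, hLG]
      module
    have hB : ∀ r s : ℤ, 2 * ys (r + s) = as s * ((s:ℂ)/2 - r) + as r * ((r:ℂ)/2 - s) := by
      intro r s
      have e := hGGid r s
      rw [hsgn1, hvform, hwform, hwform, map_smul, map_smul, hGL r s, hGL s r,
        show s + r = r + s from add_comm s r] at e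
      have e3 : (2 * ys (r+s)) • G (r+s)
          = (as s * ((s:ℂ)/2 - r) + as r * ((r:ℂ)/2 - s)) • G (r+s) := by
        linear_combination (norm := module) e
      have e4 := congrArg (fun u => bV.repr u (Sum.inr (r + s))) e3
      simp only [hGdef, hcoord] at e4
      simpa using e4
    have hzero_a : ∀ r : ℤ, as r = 0 := by
      intro r
      rcases eq_or_ne r 0 with rfl | hr
      · exact ha0
      have hrC : (r:ℂ) ≠ 0 := Int.cast_ne_zero.mpr hr
      have b1 := hB r 0
      have b2 := hB r r
      have b3 := hB r (-r)
      have b4 := hB (2*r) (-r)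
      have b5 := hB (2*r) 0
      rw [add_zero, ha0] at b1
      rw [add_zero, ha0] at b5
      rw [show r + r = 2*r from by ring] at b2
      rw [show r + -r = 0 from by ring, hy0] at b3
      rw [show 2*r + -r = r from by ring] at b4
      push_cast at b1 b2 b3 b4 b5
      have h5 : (5*(r:ℂ)) * as r = 0 := by
        linear_combination (-1 : ℂ) * (b1 - b4 - 2*b2 + 2*b5 + (5/3)*b3)
      rcases mul_eq_zero.mp h5 with h | h
      · exfalso
        have : (r:ℂ) = 0 := by linear_combination h / 5
        exact hrC this
      · exact h
    have hzero_y : ∀ n : ℤ, ys n = 0 := by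
      intro n
      have b1 := hB n 0
      rw [add_zero, ha0, hzero_a n] at b1
      have h2 : (2:ℂ) * ys n = 0 := by linear_combination b1
      linear_combination h2 / 2
    refine hmain (fun n => ?_) (fun r => ?_)
    · rw [hvform n, hzero_y n, zero_smul]
    · rw [hwform r, hzero_a r, zero_smul]
end
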